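/- arXiv:1901.02112 — 5 statements merged into one kernel-verified Lean document; each statement's English description precedes it below -/
import Mathlib

section
/- Assume r^j ∈ recc(C) for every j ∈ N₀. Then every point x = x̄ + Σ_{j∈N} x_j r^j of P^B ∖ C (with all x_j ≥ 0) satisfies at least one of the two inequalities Σ_{j∈N} x_j/λ⁻_j ≤ 1 or Σ_{j∈N} x_j/λ⁺_j ≥ 1 (using the convention x/(±∞) := 0). -/
open Set Pointwise

noncomputable section

variable {n : ℕ} {ι : Type*} [Fintype ι]

/-- Recession cone of a set `A`. -/
def recc (A : Set (Fin n → ℝ)) : Set (Fin n → ℝ) :=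
  {d | ∀ a ∈ A, ∀ t : ℝ, 0 ≤ t → a + t • d ∈ A}

/-- The translated simplicial cone `P^B = {x̄ + Σ_j x_j r^j : x_j ≥ 0}`. -/
def PBset (xb : Fin n → ℝ) (r : ι → Fin n → ℝ) : Set (Fin n → ℝ) :=
  {x | ∃ c : ι → ℝ, (∀ j, 0 ≤ c j) ∧ x = xb + ∑ j, c j • r j}

/-- The recession cone of `P^B`, i.e. `{Σ_j t_j r^j : t_j ≥ 0}`. -/
def reccPBset (r : ι → Fin n → ℝ) : Set (Fin n → ℝ) :=
  {x | ∃ t : ι → ℝ, (∀ j, 0 ≤ t j) ∧ x = ∑ j, t j • r j}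

/-- `λ⁻ = inf {λ ≥ 0 : x̄ + λ d ∈ C}` (`+∞` if the halfline misses `C`). -/
noncomputable def lamM (xb d : Fin n → ℝ) (C : Set (Fin n → ℝ)) : EReal :=
  sInf ((fun l : ℝ => (l : EReal)) '' {l : ℝ | 0 ≤ l ∧ xb + l • d ∈ C})

/-- `λ⁺ = sup {λ ≥ 0 : x̄ + λ d ∈ C}` (`−∞` if the halfline misses `C`). -/
noncomputable def lamP (xb d : Fin n → ℝ) (C : Set (Fin n → ℝ)) : EReal :=
  sSup ((fun l : ℝ => (l : EReal)) '' {l : ℝ | 0 ≤ l ∧ xb + l • d ∈ C})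

/-- `N₀`: indices whose halfline misses `C`. -/
def N0set (xb : Fin n → ℝ) (r : ι → Fin n → ℝ) (C : Set (Fin n → ℝ)) : Set ι :=
  {j | ∀ l : ℝ, 0 ≤ l → xb + l • r j ∉ C}

/-- `N₁`: indices with `0 < λ⁻ < +∞` and `λ⁺ = +∞`. -/
def N1set (xb : Fin n → ℝ) (r : ι → Fin n → ℝ) (C : Set (Fin n → ℝ)) : Set ι :=
  {j | 0 < lamM xb (r j) C ∧ lamM xb (r j) C < ⊤ ∧ lamP xb (r j) C = ⊤}

/-- `N₂`: indices with `0 < λ⁻ < +∞` and `λ⁻ < λ⁺ < +∞`. -/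
def N2set (xb : Fin n → ℝ) (r : ι → Fin n → ℝ) (C : Set (Fin n → ℝ)) : Set ι :=
  {j | 0 < lamM xb (r j) C ∧ lamM xb (r j) C < ⊤ ∧
    lamM xb (r j) C < lamP xb (r j) C ∧ lamP xb (r j) C < ⊤}

section helpers


variable {xb d : Fin n → ℝ} {C : Set (Fin n → ℝ)}

lemma seg_mem (hC : Convex ℝ C) {l1 l2 lam : ℝ}
    (h1 : xb + l1 • d ∈ C) (h2 : xb + l2 • d ∈ C)
    (hl1 : l1 ≤ lam) (hl2 : lam ≤ l2) : xb + lam • d ∈ C := by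
  rcases eq_or_lt_of_le (hl1.trans hl2) with h | h
  · have hlam : lam = l1 := le_antisymm (h ▸ hl2) hl1
    rwa [hlam]
  · set A := (l2 - lam) / (l2 - l1) with hA
    set B := (lam - l1) / (l2 - l1) with hB
    have hd : l2 - l1 ≠ 0 := sub_ne_zero.mpr h.ne'
    have hAB : A + B = 1 := by rw [hA, hB]; field_simp; ring
    have hA0 : 0 ≤ A := div_nonneg (by linarith) (by linarith)
    have hB0 : 0 ≤ B := div_nonneg (by linarith) (by linarith)
    have key : A * l1 + B * l2 = lam := by rw [hA, hB]; field_simp; ring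
    have hmem := hC h1 h2 hA0 hB0 hAB
    have e : A • (xb + l1 • d) + B • (xb + l2 • d)
        = (A + B) • xb + (A * l1 + B * l2) • d := by module
    rw [e, hAB, key, one_smul] at hmem
    exact hmem

lemma mem_of_between (hC : Convex ℝ C) {lam : ℝ}
    (h1 : lamM xb d C < (lam : EReal)) (h2 : (lam : EReal) < lamP xb d C) :
    xb + lam • d ∈ C := by
  obtain ⟨e1, he1, hlt1⟩ := sInf_lt_iff.mp h1
  obtain ⟨e2, he2, hlt2⟩ := lt_sSup_iff.mp h2
  obtain ⟨la, hla, rfl⟩ := he1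
  obtain ⟨lb, hlb, rfl⟩ := he2
  have ha' : (la : ℝ) ≤ lam := by exact_mod_cast (show (la : EReal) ≤ (lam : EReal) from hlt1.le)
  have hb' : lam ≤ (lb : ℝ) := by exact_mod_cast (show (lam : EReal) ≤ (lb : EReal) from hlt2.le)
  exact seg_mem hC hla.2 hlb.2 ha' hb'

lemma key_facts (hCopen : IsOpen C) (hCconv : Convex ℝ C) (hxb : xb ∉ closure C)
    {l0 : ℝ} (hl0 : 0 ≤ l0) (hl0C : xb + l0 • d ∈ C) :
    0 < ((lamM xb d C).toReal)⁻¹ ∧ 0 ≤ ((lamP xb d C).toReal)⁻¹ ∧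
      ((lamP xb d C).toReal)⁻¹ < ((lamM xb d C).toReal)⁻¹ ∧
      ∀ θ : ℝ, ((lamP xb d C).toReal)⁻¹ < θ → θ < ((lamM xb d C).toReal)⁻¹ →
        xb + θ⁻¹ • d ∈ C := by
  have hxbC : xb ∉ C := fun h => hxb (subset_closure h)
  have hd : d ≠ 0 := by
    rintro rfl
    apply hxbC
    simpa using hl0C
  have hdn : 0 < ‖d‖ := norm_pos_iff.mpr hd
  obtain ⟨ε, hε, hball⟩ := Metric.isOpen_iff.mp isClosed_closure.isOpen_compl xb hxb
  have hlow : ∀ l : ℝ, 0 ≤ l → xb + l • d ∈ C → ε / ‖d‖ ≤ l := by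
    intro l hl hlC
    by_contra hcon
    push_neg at hcon
    have hmem : xb + l • d ∈ Metric.ball xb ε := by
      rw [Metric.mem_ball, dist_comm, dist_self_add_right, norm_smul, Real.norm_eq_abs,
        abs_of_nonneg hl]
      calc l * ‖d‖ < (ε / ‖d‖) * ‖d‖ := mul_lt_mul_of_pos_right hcon hdn
        _ = ε := by field_simp
    exact hball hmem (subset_closure hlC)
  have hεd : 0 < ε / ‖d‖ := div_pos hε hdn
  have hMlb : ((ε / ‖d‖ : ℝ) : EReal) ≤ lamM xb d C := by
    apply le_sInf
    rintro _ ⟨l, ⟨hl, hlC⟩, rfl⟩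
    show ((ε / ‖d‖ : ℝ) : EReal) ≤ (l : EReal)
    exact_mod_cast hlow l hl hlC
  have hMub : lamM xb d C ≤ (l0 : EReal) := sInf_le ⟨l0, ⟨hl0, hl0C⟩, rfl⟩
  have hMntop : lamM xb d C ≠ ⊤ := (hMub.trans_lt (EReal.coe_lt_top l0)).ne
  have hMnbot : lamM xb d C ≠ ⊥ := ((EReal.bot_lt_coe _).trans_le hMlb).ne'
  set m := (lamM xb d C).toReal with hm
  have hMeq : lamM xb d C = (m : EReal) := (EReal.coe_toReal hMntop hMnbot).symm
  have hmpos : 0 < m := by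
    have h1 : ((ε / ‖d‖ : ℝ) : EReal) ≤ (m : EReal) := hMeq ▸ hMlb
    have h2 := EReal.coe_le_coe_iff.mp h1
    linarith
  -- strict lamM < lamP
  have hcont : Continuous fun l : ℝ => xb + l • d :=
    continuous_const.add (continuous_id.smul continuous_const)
  have hpre : IsOpen ((fun l : ℝ => xb + l • d) ⁻¹' C) := hCopen.preimage hcont
  obtain ⟨δ, hδ, hballδ⟩ := Metric.isOpen_iff.mp hpre l0 hl0C
  have hl0pos : 0 < l0 := lt_of_lt_of_le hεd (hlow l0 hl0 hl0C)
  set δ' := min δ l0 with hδ'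
  have hδ'pos : 0 < δ' := lt_min hδ hl0pos
  have hδ'le : δ' ≤ δ := min_le_left _ _
  have hδ'le' : δ' ≤ l0 := min_le_right _ _
  have hl1 : xb + (l0 - δ' / 2) • d ∈ C := by
    apply hballδ
    rw [Metric.mem_ball, Real.dist_eq, abs_of_nonpos (by linarith)]
    linarith
  have hl2 : xb + (l0 + δ' / 2) • d ∈ C := by
    apply hballδ
    rw [Metric.mem_ball, Real.dist_eq, abs_of_nonneg (by linarith)]
    linarith
  have h1nn : 0 ≤ l0 - δ' / 2 := by linarith
  have hMle : lamM xb d C ≤ ((l0 - δ' / 2 : ℝ) : EReal) := sInf_le ⟨_, ⟨h1nn, hl1⟩, rfl⟩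
  have hPge : ((l0 + δ' / 2 : ℝ) : EReal) ≤ lamP xb d C := le_sSup ⟨_, ⟨by linarith, hl2⟩, rfl⟩
  have hco : ((l0 - δ' / 2 : ℝ) : EReal) < ((l0 + δ' / 2 : ℝ) : EReal) := by
    exact_mod_cast (by linarith : (l0 - δ' / 2 : ℝ) < l0 + δ' / 2)
  have hMP : lamM xb d C < lamP xb d C := lt_of_le_of_lt hMle (lt_of_lt_of_le hco hPge)
  have hmle : (m : EReal) ≤ ((l0 - δ' / 2 : ℝ) : EReal) := hMeq ▸ hMle
  have haInv : 0 < m⁻¹ := inv_pos.mpr hmpos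
  by_cases hPtop : lamP xb d C = ⊤
  · have hb0 : (lamP xb d C).toReal = 0 := by rw [hPtop]; simp
    refine ⟨haInv, by rw [hb0]; simp, by rw [hb0]; simpa using haInv, ?_⟩
    intro θ hθ1 hθ2
    rw [hb0] at hθ1
    simp at hθ1
    have hθm : m < θ⁻¹ := by
      have := (inv_lt_inv₀ haInv hθ1).mpr hθ2
      simpa using this
    apply mem_of_between hCconv (lam := θ⁻¹)
    · rw [hMeq]; exact_mod_cast hθm
    · rw [hPtop]; exact EReal.coe_lt_top _
  · have hPnbot : lamP xb d C ≠ ⊥ := (hMnbot.bot_lt.trans hMP).ne'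
    set p := (lamP xb d C).toReal with hp
    have hPeq : lamP xb d C = (p : EReal) := (EReal.coe_toReal hPtop hPnbot).symm
    have hmp : m < p := by
      have := hMP
      rw [hMeq, hPeq] at this
      exact_mod_cast this
    have hppos : 0 < p := hmpos.trans hmp
    have hbpos : 0 < p⁻¹ := inv_pos.mpr hppos
    have hba : p⁻¹ < m⁻¹ := by exact (inv_lt_inv₀ hppos hmpos).mpr hmp
    refine ⟨haInv, hbpos.le, hba, ?_⟩
    intro θ hθ1 hθ2
    have hθpos : 0 < θ := hbpos.trans hθ1
    have hθm : m < θ⁻¹ := by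
      have := (inv_lt_inv₀ haInv hθpos).mpr hθ2
      simpa using this
    have hθp : θ⁻¹ < p := by
      have := (inv_lt_inv₀ hθpos hbpos).mpr hθ1
      simpa using this
    apply mem_of_between hCconv (lam := θ⁻¹)
    · rw [hMeq]; exact_mod_cast hθm
    · rw [hPeq]; exact_mod_cast hθp

lemma recc_add_sum (C : Set (Fin n → ℝ)) (T : Finset ι) (w : Fin n → ℝ) (hw : w ∈ C)
    (t : ι → ℝ) (d : ι → Fin n → ℝ)
    (h : ∀ j ∈ T, t j = 0 ∨ (0 ≤ t j ∧ d j ∈ recc C)) :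
    w + ∑ j ∈ T, t j • d j ∈ C := by
  classical
  induction T using Finset.induction_on with
  | empty => simpa using hw
  | insert a s hj ih =>
    rw [Finset.sum_insert hj, add_comm (t a • d a), ← add_assoc]
    have hmem := ih (fun j hjT => h j (Finset.mem_insert_of_mem hjT))
    rcases h a (Finset.mem_insert_self a s) with h0 | ⟨ht, hd⟩
    · simpa [h0] using hmem
    · exact hd _ hmem _ ht

end helpers

/-- Theorem 1, two-term intersection disjunction.
Under the assumption that `r^j ∈ recc(C)` for every `j ∈ N₀`, every point
`x = x̄ + Σ_j x_j r^j` of `P^B ∖ C` satisfies `Σ_j x_j/λ⁻_j ≤ 1` or `Σ_j x_j/λ⁺_j ≥ 1`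
(convention `x/(±∞) := 0`, realized via `EReal.toReal (±∞) = 0` and `x/0 = 0`). -/
theorem stmt0 (xb : Fin n → ℝ) (r : ι → Fin n → ℝ) (hr : LinearIndependent ℝ r)
    (C : Set (Fin n → ℝ)) (hCopen : IsOpen C) (hCconv : Convex ℝ C)
    (hxb : xb ∉ closure C)
    (hN0 : ∀ j ∈ N0set xb r C, r j ∈ recc C)
    (c : ι → ℝ) (hc : ∀ j, 0 ≤ c j)
    (hxC : xb + ∑ j, c j • r j ∉ C) :
    (∑ j, c j / (lamM xb (r j) C).toReal ≤ 1) ∨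
      (1 ≤ ∑ j, c j / (lamP xb (r j) C).toReal) := by
  classical
  by_contra hcon
  push_neg at hcon
  obtain ⟨h1, h2⟩ := hcon
  set a : ι → ℝ := fun j => ((lamM xb (r j) C).toReal)⁻¹ with ha_def
  set b : ι → ℝ := fun j => ((lamP xb (r j) C).toReal)⁻¹ with hb_def
  have h1' : 1 < ∑ j, c j * a j := by
    simpa [div_eq_mul_inv, ha_def] using h1
  have h2' : ∑ j, c j * b j < 1 := by
    simpa [div_eq_mul_inv, hb_def] using h2
  -- empty-halfline indices have a = b = 0
  have hempty : ∀ j : ι, (¬ ∃ l : ℝ, 0 ≤ l ∧ xb + l • r j ∈ C) → a j = 0 ∧ b j = 0 := by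
    intro j hj
    have hS : {l : ℝ | 0 ≤ l ∧ xb + l • r j ∈ C} = ∅ := by
      ext l
      simp only [mem_setOf_eq, mem_empty_iff_false, iff_false]
      exact fun h => hj ⟨l, h⟩
    constructor
    · simp [ha_def, lamM, hS]
    · simp [hb_def, lamP, hS]
  -- key facts for nonempty indices
  have hkey : ∀ j : ι, (∃ l : ℝ, 0 ≤ l ∧ xb + l • r j ∈ C) →
      0 < a j ∧ 0 ≤ b j ∧ b j < a j ∧
        ∀ θ : ℝ, b j < θ → θ < a j → xb + θ⁻¹ • r j ∈ C := by
    intro j ⟨l, hl, hlC⟩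
    exact key_facts hCopen hCconv hxb hl hlC
  have ha0 : ∀ j, 0 ≤ a j := by
    intro j
    by_cases hj : ∃ l : ℝ, 0 ≤ l ∧ xb + l • r j ∈ C
    · exact (hkey j hj).1.le
    · rw [(hempty j hj).1]
  have hb0 : ∀ j, 0 ≤ b j := by
    intro j
    by_cases hj : ∃ l : ℝ, 0 ≤ l ∧ xb + l • r j ∈ C
    · exact (hkey j hj).2.1
    · rw [(hempty j hj).2]
  -- a point of C exists
  obtain ⟨j0, -, hj0⟩ := Finset.exists_ne_zero_of_sum_ne_zero
    (by linarith : ∑ j, c j * a j ≠ 0)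
  have hj0S : ∃ l : ℝ, 0 ≤ l ∧ xb + l • r j0 ∈ C := by
    by_contra hS
    exact hj0 (by rw [(hempty j0 hS).1, mul_zero])
  obtain ⟨l0, -, hc0⟩ := hj0S
  set c0 : Fin n → ℝ := xb + l0 • r j0 with hc0_def
  -- the interpolation parameter
  set F : ℝ := ∑ j, c j * a j with hF
  set G : ℝ := ∑ j, c j * b j with hG
  have hFG : G < F := h2'.trans h1'
  set t : ℝ := (F - 1) / (F - G) with ht
  have ht0 : 0 < t := div_pos (by linarith) (by linarith)
  have ht1 : t < 1 := (div_lt_one (by linarith)).mpr (by linarith)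
  set θ : ι → ℝ := fun j => (1 - t) * a j + t * b j with hθ
  set μ : ι → ℝ := fun j => c j * θ j with hμ
  have hθ_eq : ∀ j, θ j = (1 - t) * a j + t * b j := fun j => by rw [hθ]
  have hμ_eq : ∀ j, μ j = c j * θ j := fun j => by rw [hμ]
  have hθ0 : ∀ j, 0 ≤ θ j := by
    intro j
    rw [hθ_eq]
    exact add_nonneg (mul_nonneg (by linarith) (ha0 j)) (mul_nonneg ht0.le (hb0 j))
  have hμ0 : ∀ j, 0 ≤ μ j := fun j => (hμ_eq j) ▸ mul_nonneg (hc j) (hθ0 j)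
  have htkey : t * (F - G) = F - 1 := by
    rw [ht, div_mul_cancel₀ _ (sub_ne_zero.mpr hFG.ne')]
  have hμsum : ∑ j, μ j = 1 := by
    have e1 : ∑ j, μ j = (1 - t) * F + t * G := by
      rw [hF, hG, Finset.mul_sum, Finset.mul_sum, ← Finset.sum_add_distrib]
      apply Finset.sum_congr rfl
      intro j _
      rw [hμ_eq, hθ_eq]
      ring
    rw [e1]
    linarith [htkey]
  -- positive-weight indices give points of C
  have hθpos_of : ∀ j, 0 < μ j → b j < θ j ∧ θ j < a j := by
    intro j hμj
    rw [hμ_eq] at hμj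
    have hcθ : 0 < θ j := by
      rcases (mul_pos_iff.mp hμj) with ⟨-, h⟩ | ⟨h', -⟩
      · exact h
      · exact absurd h' (not_lt.mpr (hc j))
    have hjS : ∃ l : ℝ, 0 ≤ l ∧ xb + l • r j ∈ C := by
      by_contra hS
      obtain ⟨hA, hB⟩ := hempty j hS
      rw [hθ_eq, hA, hB] at hcθ
      linarith
    obtain ⟨hA, hB, hBA, -⟩ := hkey j hjS
    have e0 := hθ_eq j
    constructor
    · nlinarith [e0, mul_pos (by linarith : (0:ℝ) < 1 - t) (by linarith : (0:ℝ) < a j - b j)]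
    · nlinarith [e0, mul_pos ht0 (by linarith : (0:ℝ) < a j - b j)]
  set z : ι → Fin n → ℝ := fun j => if 0 < μ j then xb + (θ j)⁻¹ • r j else c0 with hz_def
  have hz_eq : ∀ j, z j = if 0 < μ j then xb + (θ j)⁻¹ • r j else c0 := fun j => by rw [hz_def]
  have hzC : ∀ j, z j ∈ C := by
    intro j
    rw [hz_eq]
    by_cases h : 0 < μ j
    · rw [if_pos h]
      obtain ⟨hb', ha'⟩ := hθpos_of j h
      have hjS : ∃ l : ℝ, 0 ≤ l ∧ xb + l • r j ∈ C := by
        by_contra hS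
        obtain ⟨hA, hB⟩ := hempty j hS
        rw [hA] at ha'
        rw [hB] at hb'
        linarith
      exact (hkey j hjS).2.2.2 _ hb' ha'
    · rw [if_neg h]
      exact hc0
  have hwC : ∑ j, μ j • z j ∈ C :=
    hCconv.sum_mem (fun j _ => hμ0 j) hμsum (fun j _ => hzC j)
  -- rewrite the convex combination
  have hterm : ∀ j, μ j • z j = μ j • xb + (if 0 < μ j then c j • r j else (0 : Fin n → ℝ)) := by
    intro j
    by_cases h : 0 < μ j
    · have hθj : 0 < θ j := by
        have h' := h
        rw [hμ_eq] at h'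
        rcases (mul_pos_iff.mp h') with ⟨-, h''⟩ | ⟨h'', -⟩
        · exact h''
        · exact absurd h'' (not_lt.mpr (hc j))
      rw [hz_eq]
      simp only [if_pos h, smul_add, smul_smul]
      congr 2
      rw [hμ_eq]
      field_simp
    · have hμz : μ j = 0 := le_antisymm (not_lt.mp h) (hμ0 j)
      simp [hμz, h]
  have hwsum : ∑ j, μ j • z j = xb + ∑ j, (if 0 < μ j then c j • r j else (0 : Fin n → ℝ)) := by
    calc ∑ j, μ j • z j
        = ∑ j, (μ j • xb + (if 0 < μ j then c j • r j else (0 : Fin n → ℝ))) :=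
          Finset.sum_congr rfl fun j _ => hterm j
      _ = (∑ j, μ j) • xb + ∑ j, (if 0 < μ j then c j • r j else (0 : Fin n → ℝ)) := by
          rw [Finset.sum_add_distrib, Finset.sum_smul]
      _ = xb + ∑ j, (if 0 < μ j then c j • r j else (0 : Fin n → ℝ)) := by
          rw [hμsum, one_smul]
  have hx_split : xb + ∑ j, c j • r j
      = (∑ j, μ j • z j) + ∑ j, (if 0 < μ j then (0 : ℝ) else c j) • r j := by
    rw [hwsum, add_assoc, ← Finset.sum_add_distrib]
    congr 1
    apply Finset.sum_congr rfl
    intro j _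
    by_cases h : 0 < μ j <;> simp [h]
  -- the leftover directions are recession directions
  have hcond : ∀ j ∈ Finset.univ,
      (if 0 < μ j then (0 : ℝ) else c j) = 0 ∨
        (0 ≤ (if 0 < μ j then (0 : ℝ) else c j) ∧ r j ∈ recc C) := by
    intro j _
    by_cases h : 0 < μ j
    · left; rw [if_pos h]
    · rw [if_neg h]
      by_cases hcj : c j = 0
      · left; exact hcj
      · right
        refine ⟨hc j, ?_⟩
        have hμz : μ j = 0 := le_antisymm (not_lt.mp h) (hμ0 j)
        have hθz : θ j = 0 := by
          rw [hμ_eq] at hμz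
          rcases mul_eq_zero.mp hμz with h' | h'
          · exact absurd h' hcj
          · exact h'
        have hjS : ¬ ∃ l : ℝ, 0 ≤ l ∧ xb + l • r j ∈ C := by
          intro hS
          obtain ⟨hA, -, -, -⟩ := hkey j hS
          have h1t : 0 < 1 - t := by linarith
          have e0 := hθ_eq j
          nlinarith [mul_nonneg ht0.le (hb0 j), mul_pos h1t hA]
        apply hN0 j
        intro l hl hlC
        exact hjS ⟨l, hl, hlC⟩
  have hfinal : xb + ∑ j, c j • r j ∈ C := by
    rw [hx_split]
    exact recc_add_sum C Finset.univ _ hwC _ r hcond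
  exact hxC hfinal
end
end

section
/- Assume r^j ∈ recc(C) for every j ∈ N₀ and assume C is bounded. Then conv({x ∈ P^B ∖ C : Σ_{j∈N} x_j/λ⁻_j ≤ 1}) = {x ∈ P^B : Σ_{j∈N} x_j/λ⁻_j ≤ 1}, and conv({x ∈ P^B ∖ C : Σ_{j∈N} x_j/λ⁺_j ≥ 1}) = {x ∈ P^B : Σ_{j∈N} x_j/λ⁺_j ≥ 1}, where each x ∈ P^B is written as x = x̄ + Σ_{j∈N} x_j r^j with all x_j ≥ 0 (using the convention x/(±∞) := 0). -/
open Set Pointwise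

noncomputable section

variable {n : ℕ} {ι : Type*} [Fintype ι]

/-- Basic facts about the entry and exit parameters of a ray that meets `C`. -/
private lemma ray_facts {n : ℕ} {xb d : Fin n → ℝ} {C : Set (Fin n → ℝ)} (hCopen : IsOpen C)
    (hxb : xb ∉ closure C) (hCbdd : Bornology.IsBounded C)
    (hne : {l : ℝ | 0 ≤ l ∧ xb + l • d ∈ C}.Nonempty) :
    (0 < (lamM xb d C).toReal ∧ xb + (lamM xb d C).toReal • d ∉ C) ∧
    (0 < (lamP xb d C).toReal ∧ xb + (lamP xb d C).toReal • d ∉ C) := by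
  set L := {l : ℝ | 0 ≤ l ∧ xb + l • d ∈ C} with hLdef
  have hd : d ≠ 0 := by
    rintro rfl
    obtain ⟨l, _, hl⟩ := hne
    exact hxb (subset_closure (by simpa using hl))
  have hdpos : 0 < ‖d‖ := norm_pos_iff.2 hd
  -- ε-lower bound on elements of L
  obtain ⟨ε, εpos, hε⟩ : ∃ ε > 0, ∀ l ∈ L, ε / ‖d‖ ≤ l := by
    rw [Metric.mem_closure_iff] at hxb
    push_neg at hxb
    obtain ⟨ε, εpos, hεC⟩ := hxb
    refine ⟨ε, εpos, ?_⟩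
    rintro l ⟨hl0, hlC⟩
    have h1 : ε ≤ dist xb (xb + l • d) := hεC _ hlC
    have h2 : dist xb (xb + l • d) = l * ‖d‖ := by
      rw [dist_self_add_right, norm_smul, Real.norm_eq_abs, abs_of_nonneg hl0]
    rw [h2] at h1
    rw [div_le_iff₀ hdpos]
    linarith
  have hεd : 0 < ε / ‖d‖ := by positivity
  have hbddBelow : BddBelow L := ⟨0, fun l hl => hl.1⟩
  have hbddAbove : BddAbove L := by
    obtain ⟨R, hR⟩ := hCbdd.subset_closedBall 0
    refine ⟨(R + ‖xb‖) / ‖d‖, ?_⟩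
    rintro l ⟨hl0, hlC⟩
    have h1 : ‖xb + l • d‖ ≤ R := by
      have := hR hlC
      rwa [Metric.mem_closedBall, dist_zero_right] at this
    have h2 : ‖l • d‖ ≤ ‖xb + l • d‖ + ‖xb‖ := by
      have := norm_sub_le (xb + l • d) xb
      simpa using this
    rw [norm_smul, Real.norm_eq_abs, abs_of_nonneg hl0] at h2
    rw [le_div_iff₀ hdpos]
    linarith
  have hLopen : IsOpen L := by
    have hcont : Continuous fun l : ℝ => xb + l • d :=
      continuous_const.add (continuous_id.smul continuous_const)
    have : L = ((fun l : ℝ => xb + l • d) ⁻¹' C) ∩ Ioi 0 := by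
      ext l
      constructor
      · rintro ⟨hl0, hlC⟩
        exact ⟨hlC, lt_of_lt_of_le hεd (hε l ⟨hl0, hlC⟩)⟩
      · rintro ⟨hlC, hl0⟩
        exact ⟨le_of_lt hl0, hlC⟩
    rw [this]
    exact (hCopen.preimage hcont).inter isOpen_Ioi
  -- identify lamM / lamP with real sInf / sSup
  have hcoe : Monotone (fun l : ℝ => (l : EReal)) := fun a b h => EReal.coe_le_coe_iff.2 h
  have hM : lamM xb d C = ((sInf L : ℝ) : EReal) := by
    rw [lamM, ← Monotone.map_csInf_of_continuousAt
      (continuous_coe_real_ereal.continuousAt) hcoe hne hbddBelow]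
  have hP : lamP xb d C = ((sSup L : ℝ) : EReal) := by
    rw [lamP, ← Monotone.map_csSup_of_continuousAt
      (continuous_coe_real_ereal.continuousAt) hcoe hne hbddAbove]
  have hMt : (lamM xb d C).toReal = sInf L := by rw [hM, EReal.toReal_coe]
  have hPt : (lamP xb d C).toReal = sSup L := by rw [hP, EReal.toReal_coe]
  -- positivity
  have hInfPos : 0 < sInf L := lt_of_lt_of_le hεd (le_csInf hne hε)
  have hSupPos : 0 < sSup L := by
    obtain ⟨l, hl⟩ := hne
    exact lt_of_lt_of_le (lt_of_lt_of_le hεd (hε l hl)) (le_csSup hbddAbove hl)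
  -- the inf is not attained
  have hInfNot : sInf L ∉ L := by
    intro hmem
    obtain ⟨δ, δpos, hδ⟩ := Metric.isOpen_iff.1 hLopen _ hmem
    have : sInf L - δ / 2 ∈ L := by
      apply hδ
      rw [Metric.mem_ball, Real.dist_eq]
      rw [abs_of_nonpos (by linarith)]
      linarith
    have := csInf_le hbddBelow this
    linarith
  have hSupNot : sSup L ∉ L := by
    intro hmem
    obtain ⟨δ, δpos, hδ⟩ := Metric.isOpen_iff.1 hLopen _ hmem
    have : sSup L + δ / 2 ∈ L := by
      apply hδ
      rw [Metric.mem_ball, Real.dist_eq]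
      rw [abs_of_nonneg (by linarith)]
      linarith
    have := le_csSup hbddAbove this
    linarith
  refine ⟨⟨by rw [hMt]; exact hInfPos, ?_⟩, ⟨by rw [hPt]; exact hSupPos, ?_⟩⟩
  · rw [hMt]
    intro hmem
    exact hInfNot ⟨le_of_lt hInfPos, hmem⟩
  · rw [hPt]
    intro hmem
    exact hSupNot ⟨le_of_lt hSupPos, hmem⟩

/-- The "relaxed" sets defined by a linear inequality on the coefficients are convex. -/
private lemma convex_Tset {n : ℕ} {ι : Type*} [Fintype ι] (xb : Fin n → ℝ) (r : ι → Fin n → ℝ)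
    (q : ι → ℝ) (P : ℝ → Prop)
    (hP : ∀ u v a b : ℝ, 0 ≤ a → 0 ≤ b → a + b = 1 → P u → P v → P (a * u + b * v)) :
    Convex ℝ {x : Fin n → ℝ | ∃ c : ι → ℝ, (∀ j, 0 ≤ c j) ∧ x = xb + ∑ j, c j • r j ∧
      P (∑ j, c j / q j)} := by
  rintro x ⟨c, hc, hx, hcut⟩ y ⟨e, he, hy, hecut⟩ a b ha hb hab
  refine ⟨fun j => a * c j + b * e j,
    fun j => add_nonneg (mul_nonneg ha (hc j)) (mul_nonneg hb (he j)), ?_, ?_⟩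
  · rw [hx, hy]
    simp only [smul_add, Finset.smul_sum, smul_smul, add_smul]
    rw [Finset.sum_add_distrib, ← add_assoc, add_right_comm (a • xb) _ (b • xb),
      ← add_smul, hab, one_smul, add_assoc]
  · have hsum : ∑ j, (a * c j + b * e j) / q j
        = a * (∑ j, c j / q j) + b * (∑ j, e j / q j) := by
      rw [Finset.mul_sum, Finset.mul_sum, ← Finset.sum_add_distrib]
      refine Finset.sum_congr rfl fun j _ => ?_
      rw [add_div, mul_div_assoc, mul_div_assoc]
    rw [hsum]
    exact hP _ _ _ _ ha hb hab hcut hecut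

/-- Proposition 1. If `r^j ∈ recc(C)` for every `j ∈ N₀` and `C` is
bounded, then each of the two inequalities of the disjunction, intersected with `P^B ∖ C`,
has convex hull equal to `P^B` intersected with the corresponding inequality. -/
theorem stmt1 (xb : Fin n → ℝ) (r : ι → Fin n → ℝ) (hr : LinearIndependent ℝ r)
    (C : Set (Fin n → ℝ)) (hCopen : IsOpen C) (hCconv : Convex ℝ C)
    (hxb : xb ∉ closure C) (hCbdd : Bornology.IsBounded C)
    (hN0 : ∀ j ∈ N0set xb r C, r j ∈ recc C) :
    (convexHull ℝ {x : Fin n → ℝ | ∃ c : ι → ℝ, (∀ j, 0 ≤ c j) ∧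
        x = xb + ∑ j, c j • r j ∧ x ∉ C ∧ ∑ j, c j / (lamM xb (r j) C).toReal ≤ 1}
      = {x : Fin n → ℝ | ∃ c : ι → ℝ, (∀ j, 0 ≤ c j) ∧
        x = xb + ∑ j, c j • r j ∧ ∑ j, c j / (lamM xb (r j) C).toReal ≤ 1}) ∧
    (convexHull ℝ {x : Fin n → ℝ | ∃ c : ι → ℝ, (∀ j, 0 ≤ c j) ∧
        x = xb + ∑ j, c j • r j ∧ x ∉ C ∧ 1 ≤ ∑ j, c j / (lamP xb (r j) C).toReal}
      = {x : Fin n → ℝ | ∃ c : ι → ℝ, (∀ j, 0 ≤ c j) ∧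
        x = xb + ∑ j, c j • r j ∧ 1 ≤ ∑ j, c j / (lamP xb (r j) C).toReal}) := by
  have hxbC : xb ∉ C := fun h => hxb (subset_closure h)
  rcases Set.eq_empty_or_nonempty C with hCe | hCne
  · -- C is empty
    subst hCe
    have hMt : ∀ j, (lamM xb (r j) (∅ : Set (Fin n → ℝ))).toReal = 0 := by
      intro j
      have : {l : ℝ | 0 ≤ l ∧ xb + l • r j ∈ (∅ : Set (Fin n → ℝ))} = ∅ := by
        ext l; simp
      rw [lamM, this, image_empty, sInf_empty, EReal.toReal_top]
    have hPt : ∀ j, (lamP xb (r j) (∅ : Set (Fin n → ℝ))).toReal = 0 := by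
      intro j
      have : {l : ℝ | 0 ≤ l ∧ xb + l • r j ∈ (∅ : Set (Fin n → ℝ))} = ∅ := by
        ext l; simp
      rw [lamP, this, image_empty, sSup_empty, EReal.toReal_bot]
    constructor
    · have hST : {x : Fin n → ℝ | ∃ c : ι → ℝ, (∀ j, 0 ≤ c j) ∧
          x = xb + ∑ j, c j • r j ∧ x ∉ (∅ : Set (Fin n → ℝ)) ∧
          ∑ j, c j / (lamM xb (r j) (∅ : Set (Fin n → ℝ))).toReal ≤ 1}
          = {x : Fin n → ℝ | ∃ c : ι → ℝ, (∀ j, 0 ≤ c j) ∧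
          x = xb + ∑ j, c j • r j ∧
          ∑ j, c j / (lamM xb (r j) (∅ : Set (Fin n → ℝ))).toReal ≤ 1} := by
        ext x
        constructor
        · rintro ⟨c, h1, h2, _, h4⟩; exact ⟨c, h1, h2, h4⟩
        · rintro ⟨c, h1, h2, h4⟩; exact ⟨c, h1, h2, notMem_empty x, h4⟩
      rw [hST]
      exact Convex.convexHull_eq (convex_Tset xb r _ (fun u => u ≤ 1)
        (fun u v a b ha hb hab hu hv => by nlinarith))
    · have hS : {x : Fin n → ℝ | ∃ c : ι → ℝ, (∀ j, 0 ≤ c j) ∧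
          x = xb + ∑ j, c j • r j ∧ x ∉ (∅ : Set (Fin n → ℝ)) ∧
          1 ≤ ∑ j, c j / (lamP xb (r j) (∅ : Set (Fin n → ℝ))).toReal}
          = (∅ : Set (Fin n → ℝ)) := by
        ext x
        simp only [mem_setOf_eq, mem_empty_iff_false, iff_false, not_exists]
        rintro c ⟨h1, h2, h3, h4⟩
        rw [Finset.sum_congr rfl (fun j _ => by rw [hPt j, div_zero])] at h4
        simp only [Finset.sum_const_zero] at h4
        linarith
      have hT : {x : Fin n → ℝ | ∃ c : ι → ℝ, (∀ j, 0 ≤ c j) ∧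
          x = xb + ∑ j, c j • r j ∧
          1 ≤ ∑ j, c j / (lamP xb (r j) (∅ : Set (Fin n → ℝ))).toReal}
          = (∅ : Set (Fin n → ℝ)) := by
        ext x
        simp only [mem_setOf_eq, mem_empty_iff_false, iff_false, not_exists]
        rintro c ⟨h1, h2, h4⟩
        rw [Finset.sum_congr rfl (fun j _ => by rw [hPt j, div_zero])] at h4
        simp only [Finset.sum_const_zero] at h4
        linarith
      rw [hS, hT, convexHull_empty]
  · -- C is nonempty: every halfline meets C
    obtain ⟨R, hR⟩ := hCbdd.subset_closedBall 0
    have hr0 : ∀ j, r j ≠ 0 := fun j => hr.ne_zero j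
    have hne : ∀ j, {l : ℝ | 0 ≤ l ∧ xb + l • r j ∈ C}.Nonempty := by
      intro j
      by_contra hemp
      rw [not_nonempty_iff_eq_empty] at hemp
      have hj : j ∈ N0set xb r C := by
        intro l hl hlC
        have : l ∈ {l : ℝ | 0 ≤ l ∧ xb + l • r j ∈ C} := ⟨hl, hlC⟩
        rw [hemp] at this
        exact this
      obtain ⟨a, ha⟩ := hCne
      have hrec := hN0 j hj
      have hrpos : 0 < ‖r j‖ := norm_pos_iff.2 (hr0 j)
      have hR0 : 0 ≤ R := by
        have := hR ha
        rw [Metric.mem_closedBall] at this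
        exact le_trans dist_nonneg this
      set t := (R + ‖a‖ + 1) / ‖r j‖ with ht
      have htpos : 0 ≤ t :=
        div_nonneg (by linarith [norm_nonneg a]) (le_of_lt hrpos)
      have hmem := hrec a ha t htpos
      have h1 : ‖a + t • r j‖ ≤ R := by
        have := hR hmem
        rwa [Metric.mem_closedBall, dist_zero_right] at this
      have h2 : ‖t • r j‖ ≤ ‖a + t • r j‖ + ‖a‖ := by
        have := norm_sub_le (a + t • r j) a
        simpa using this
      rw [norm_smul, Real.norm_eq_abs, abs_of_nonneg htpos, ht,
        div_mul_cancel₀ _ (ne_of_gt hrpos)] at h2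
      linarith
    have hfacts := fun j => ray_facts hCopen hxb hCbdd (hne j)
    set am : ι → ℝ := fun j => (lamM xb (r j) C).toReal with ham_def
    set ap : ι → ℝ := fun j => (lamP xb (r j) C).toReal with hap_def
    have ham : ∀ j, 0 < am j := fun j => (hfacts j).1.1
    have hamC : ∀ j, xb + am j • r j ∉ C := fun j => (hfacts j).1.2
    have hap : ∀ j, 0 < ap j := fun j => (hfacts j).2.1
    have hapC : ∀ j, xb + ap j • r j ∉ C := fun j => (hfacts j).2.2
    constructor
    · -- first equality (λ⁻)
      apply Subset.antisymm
      · apply convexHull_min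
        · rintro x ⟨c, h1, h2, _, h4⟩
          exact ⟨c, h1, h2, h4⟩
        · exact convex_Tset xb r _ (fun u => u ≤ 1)
            (fun u v a b ha hb hab hu hv => by nlinarith)
      · rintro x ⟨c, hc0, hxeq, hcut⟩
        set s := ∑ j, c j / am j with hs_def
        have hs0 : 0 ≤ s := Finset.sum_nonneg fun j _ =>
          div_nonneg (hc0 j) (le_of_lt (ham j))
        -- points of S
        have hxbS : xb ∈ {x : Fin n → ℝ | ∃ c : ι → ℝ, (∀ j, 0 ≤ c j) ∧
            x = xb + ∑ j, c j • r j ∧ x ∉ C ∧ ∑ j, c j / am j ≤ 1} := by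
          refine ⟨fun _ => 0, fun _ => le_refl 0, by simp, hxbC, by simp⟩
        have hyS : ∀ j, xb + am j • r j ∈ {x : Fin n → ℝ | ∃ c : ι → ℝ, (∀ j, 0 ≤ c j) ∧
            x = xb + ∑ j, c j • r j ∧ x ∉ C ∧ ∑ j, c j / am j ≤ 1} := by
          intro j
          classical
          refine ⟨fun i => if i = j then am j else 0,
            fun i => by by_cases h : i = j <;> simp [h, le_of_lt (ham j)], ?_, hamC j, ?_⟩
          · show xb + am j • r j = xb + ∑ i, (if i = j then am j else 0) • r i
            rw [Finset.sum_eq_single j (fun i _ hij => by simp [hij])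
              (fun h => absurd (Finset.mem_univ j) h)]
            simp
          · show (∑ i, (if i = j then am j else 0) / am i) ≤ 1
            rw [Finset.sum_eq_single j (fun i _ hij => by simp [hij])
              (fun h => absurd (Finset.mem_univ j) h)]
            simp [div_self (ne_of_gt (ham j))]
        -- x is a convex combination
        classical
        set μ : Option ι → ℝ := fun o => o.elim (1 - s) (fun j => c j / am j) with hμ_def
        set z : Option ι → Fin n → ℝ := fun o => o.elim xb (fun j => xb + am j • r j)
          with hz_def
        have hμ0 : ∀ o ∈ Finset.univ (α := Option ι), 0 ≤ μ o := by
          rintro (_ | j) _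
          · simpa [hμ_def] using sub_nonneg.2 hcut
          · exact div_nonneg (hc0 j) (le_of_lt (ham j))
        have hμsum : ∑ o : Option ι, μ o = 1 := by
          rw [Fintype.sum_option]
          simp [hμ_def, hs_def]
        have hzS : ∀ o ∈ Finset.univ (α := Option ι),
            z o ∈ {x : Fin n → ℝ | ∃ c : ι → ℝ, (∀ j, 0 ≤ c j) ∧
            x = xb + ∑ j, c j • r j ∧ x ∉ C ∧ ∑ j, c j / am j ≤ 1} := by
          rintro (_ | j) _
          · exact hxbS
          · exact hyS j
        have hxcm : x = Finset.univ.centerMass μ z := by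
          rw [Finset.centerMass_eq_of_sum_1 _ _ hμsum, Fintype.sum_option]
          have h1 : ∀ j, (c j / am j) • (xb + am j • r j)
              = (c j / am j) • xb + c j • r j := by
            intro j
            rw [smul_add, smul_smul, div_mul_cancel₀ _ (ne_of_gt (ham j))]
          simp only [hμ_def, hz_def, Option.elim]
          rw [Finset.sum_congr rfl (fun j _ => h1 j), Finset.sum_add_distrib,
            ← Finset.sum_smul, ← hs_def, ← add_assoc, ← add_smul, sub_add_cancel, one_smul]
          exact hxeq
        rw [hxcm]
        exact Finset.centerMass_mem_convexHull _ hμ0 (by rw [hμsum]; norm_num) hzS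
    · -- second equality (λ⁺)
      apply Subset.antisymm
      · apply convexHull_min
        · rintro x ⟨c, h1, h2, _, h4⟩
          exact ⟨c, h1, h2, h4⟩
        · exact convex_Tset xb r _ (fun u => 1 ≤ u)
            (fun u v a b ha hb hab hu hv => by nlinarith)
      · rintro x ⟨c, hc0, hxeq, hcut⟩
        set S := {x : Fin n → ℝ | ∃ c : ι → ℝ, (∀ j, 0 ≤ c j) ∧
            x = xb + ∑ j, c j • r j ∧ x ∉ C ∧ 1 ≤ ∑ j, c j / ap j} with hS_def
        set s := ∑ j, c j / ap j with hs_def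
        have hs1 : 1 ≤ s := hcut
        have hspos : 0 < s := lt_of_lt_of_le one_pos hs1
        have hsne : s ≠ 0 := ne_of_gt hspos
        set v := ∑ j, c j • r j with hv_def
        have hv0 : v ≠ 0 := by
          intro hv
          have hall := Fintype.linearIndependent_iff.1 hr c (by rw [← hv_def, hv])
          have : s = 0 := by
            rw [hs_def]
            exact Finset.sum_eq_zero fun j _ => by rw [hall j, zero_div]
          exact hsne this
        have hvpos : 0 < ‖v‖ := norm_pos_iff.2 hv0
        set M := max 2 ((R + ‖xb‖ + 1) / ‖v‖) with hM_def
        have hM2 : (2 : ℝ) ≤ M := le_max_left _ _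
        have hMv : R + ‖xb‖ + 1 ≤ M * ‖v‖ := by
          have := le_max_right 2 ((R + ‖xb‖ + 1) / ‖v‖)
          rw [div_le_iff₀ hvpos] at this
          calc R + ‖xb‖ + 1 ≤ ((R + ‖xb‖ + 1) / ‖v‖) * ‖v‖ := by
                rw [div_mul_cancel₀ _ (ne_of_gt hvpos)]
              _ ≤ M * ‖v‖ := by
                apply mul_le_mul_of_nonneg_right (le_max_right _ _) (le_of_lt hvpos)
        -- the far point w
        set w := xb + M • v with hw_def
        have hwC : w ∉ C := by
          intro hmem
          have h1 : ‖w‖ ≤ R := by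
            have := hR hmem
            rwa [Metric.mem_closedBall, dist_zero_right] at this
          have h2 : ‖M • v‖ ≤ ‖w‖ + ‖xb‖ := by
            have := norm_sub_le w xb
            simp only [hw_def] at this ⊢
            simpa using this
          rw [norm_smul, Real.norm_eq_abs, abs_of_nonneg (by linarith : (0:ℝ) ≤ M)] at h2
          linarith
        have hwS : w ∈ S := by
          refine ⟨fun j => M * c j, fun j => mul_nonneg (by linarith) (hc0 j), ?_, hwC, ?_⟩
          · show xb + M • v = xb + ∑ j, (M * c j) • r j
            rw [hv_def, Finset.smul_sum]
            congr 1
            exact Finset.sum_congr rfl fun j _ => smul_smul M (c j) (r j)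
          · show 1 ≤ ∑ j, M * c j / ap j
            have : ∑ j, M * c j / ap j = M * s := by
              rw [hs_def, Finset.mul_sum]
              exact Finset.sum_congr rfl fun j _ => (mul_div_assoc M (c j) (ap j))
            rw [this]
            nlinarith
        -- the point z on the simplex spanned by the exit points
        have hyS : ∀ j, xb + ap j • r j ∈ S := by
          intro j
          classical
          refine ⟨fun i => if i = j then ap j else 0,
            fun i => by by_cases h : i = j <;> simp [h, le_of_lt (hap j)], ?_, hapC j, ?_⟩
          · show xb + ap j • r j = xb + ∑ i, (if i = j then ap j else 0) • r i
            rw [Finset.sum_eq_single j (fun i _ hij => by simp [hij])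
              (fun h => absurd (Finset.mem_univ j) h)]
            simp
          · show 1 ≤ ∑ i, (if i = j then ap j else 0) / ap i
            rw [Finset.sum_eq_single j (fun i _ hij => by simp [hij])
              (fun h => absurd (Finset.mem_univ j) h)]
            simp [div_self (ne_of_gt (hap j))]
        classical
        set ν : ι → ℝ := fun j => c j / ap j / s with hν_def
        have hν0 : ∀ j ∈ Finset.univ (α := ι), 0 ≤ ν j := fun j _ =>
          div_nonneg (div_nonneg (hc0 j) (le_of_lt (hap j))) (le_of_lt hspos)
        have hνsum : ∑ j, ν j = 1 := by
          rw [hν_def]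
          rw [← Finset.sum_div, ← hs_def, div_self hsne]
        set z := xb + s⁻¹ • v with hz_def
        have hzconv : z ∈ convexHull ℝ S := by
          have hcm : z = Finset.univ.centerMass ν (fun j => xb + ap j • r j) := by
            rw [Finset.centerMass_eq_of_sum_1 _ _ hνsum]
            have h1 : ∀ j, ν j • (xb + ap j • r j) = ν j • xb + (s⁻¹ * c j) • r j := by
              intro j
              rw [smul_add, smul_smul]
              congr 2
              show c j / ap j / s * ap j = s⁻¹ * c j
              field_simp [ne_of_gt (hap j), hsne]
            rw [Finset.sum_congr rfl (fun j _ => h1 j), Finset.sum_add_distrib,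
              ← Finset.sum_smul, hνsum, one_smul, hz_def, hv_def, Finset.smul_sum]
            congr 1
            exact Finset.sum_congr rfl fun j _ => smul_smul s⁻¹ (c j) (r j)

          rw [hcm]
          exact Finset.centerMass_mem_convexHull _ hν0 (by rw [hνsum]; norm_num)
            (fun j _ => hyS j)
        -- x is a convex combination of z and w
        have hsinv1 : s⁻¹ ≤ 1 := by
          rw [inv_le_one_iff₀]
          right; exact hs1
        have hsinv0 : 0 < s⁻¹ := inv_pos.2 hspos
        have hden : 0 < M - s⁻¹ := by linarith
        set θ := (M - 1) / (M - s⁻¹) with hθ_def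
        have hθ0 : 0 ≤ θ := div_nonneg (by linarith) (le_of_lt hden)
        have hθ1 : 0 ≤ 1 - θ := by
          rw [hθ_def]
          rw [sub_nonneg, div_le_one hden]
          linarith
        have hcomb : θ * s⁻¹ + (1 - θ) * M = 1 := by
          have h1 : M - s⁻¹ ≠ 0 := ne_of_gt hden
          have hθden : θ * (M - s⁻¹) = M - 1 := by
            rw [hθ_def]
            exact div_mul_cancel₀ _ h1
          linear_combination -hθden
        have hxzw : x = θ • z + (1 - θ) • w := by
          rw [hz_def, hw_def, smul_add, smul_add, smul_smul, smul_smul]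
          rw [hxeq]
          have hsplit : θ • xb + (θ * s⁻¹) • v + ((1 - θ) • xb + ((1 - θ) * M) • v)
              = (θ + (1 - θ)) • xb + (θ * s⁻¹ + (1 - θ) * M) • v := by
            rw [add_smul, add_smul]
            abel
          have h3 : θ + (1 - θ) = 1 := by ring
          rw [hsplit, h3, hcomb, one_smul, one_smul]
        rw [hxzw]
        exact (convex_convexHull ℝ S) hzconv (subset_convexHull ℝ S hwS) hθ0 hθ1
          (by ring)
end
end

section
/- Let T^{P^B∩C} := T + recc(P^B ∩ C) (the interval parameters λ⁻_j, λ⁺_j defining T are unchanged when C is replaced by P^B ∩ C, since each halfline {x̄ + λ r^j : λ ≥ 0} lies in P^B). Then cl(conv(P^B ∖ C)) = cl(conv(P^B ∖ T^{P^B∩C})). -/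
open Set Pointwise

noncomputable section

variable {n : ℕ} {ι : Type*} [Fintype ι]

/-- `T = {x̄} + conv(⋃_{j∈N₁∪N₂} {λ r^j : λ⁻_j < λ < λ⁺_j})`. -/
def Tset (xb : Fin n → ℝ) (r : ι → Fin n → ℝ) (C : Set (Fin n → ℝ)) : Set (Fin n → ℝ) :=
  {xb} + convexHull ℝ (⋃ j ∈ N1set xb r C ∪ N2set xb r C,
    {y : Fin n → ℝ | ∃ l : ℝ, lamM xb (r j) C < (l : EReal) ∧ (l : EReal) < lamP xb (r j) C ∧
      y = l • r j})

/-- `T^C = T + recc(C)`. -/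
def TCset (xb : Fin n → ℝ) (r : ι → Fin n → ℝ) (C : Set (Fin n → ℝ)) : Set (Fin n → ℝ) :=
  Tset xb r C + recc C

/-- `R = {x̄} + conv(⋃_{j∈N₁} {λ r^j : λ > λ⁻_j})`. -/
def Rset (xb : Fin n → ℝ) (r : ι → Fin n → ℝ) (C : Set (Fin n → ℝ)) : Set (Fin n → ℝ) :=
  {xb} + convexHull ℝ (⋃ j ∈ N1set xb r C,
    {y : Fin n → ℝ | ∃ l : ℝ, lamM xb (r j) C < (l : EReal) ∧ y = l • r j})

/-- `R^C = R + recc(C)`. -/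
def RCset (xb : Fin n → ℝ) (r : ι → Fin n → ℝ) (C : Set (Fin n → ℝ)) : Set (Fin n → ℝ) :=
  Rset xb r C + recc C

namespace Stmt3Aux

open scoped Classical

variable {n : ℕ} {ι : Type*} [Fintype ι]

/-- Sub-cone of `P^B` spanned by the rays indexed by `s`. -/
def PS (xb : Fin n → ℝ) (r : ι → Fin n → ℝ) (s : Finset ι) : Set (Fin n → ℝ) :=
  {x | ∃ c : ι → ℝ, (∀ j, 0 ≤ c j) ∧ (∀ j, j ∉ s → c j = 0) ∧ x = xb + ∑ j, c j • r j}

/-- The part of `T` using only rays indexed by `s`. -/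
def TS (xb : Fin n → ℝ) (r : ι → Fin n → ℝ) (C : Set (Fin n → ℝ)) (s : Finset ι) :
    Set (Fin n → ℝ) :=
  {xb} + convexHull ℝ (⋃ j ∈ (N1set xb r C ∪ N2set xb r C) ∩ {i | i ∈ s},
    {y : Fin n → ℝ | ∃ l : ℝ, lamM xb (r j) C < (l : EReal) ∧ (l : EReal) < lamP xb (r j) C ∧
      y = l • r j})

section Basic

variable {xb : Fin n → ℝ} {r : ι → Fin n → ℝ} {C : Set (Fin n → ℝ)}

lemma PS_univ : PS xb r (Finset.univ : Finset ι) = PBset xb r := by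
  ext x
  constructor
  · rintro ⟨c, h1, _, h3⟩; exact ⟨c, h1, h3⟩
  · rintro ⟨c, h1, h3⟩; exact ⟨c, h1, fun j hj => absurd (Finset.mem_univ j) hj, h3⟩

lemma TS_univ : TS xb r C (Finset.univ : Finset ι) = Tset xb r C := by
  unfold TS Tset
  congr 1
  congr 1
  congr 1
  ext j
  simp

lemma PS_subset_PB {s : Finset ι} : PS xb r s ⊆ PBset xb r := by
  rintro x ⟨c, h1, _, h3⟩; exact ⟨c, h1, h3⟩

lemma mem_PS_of_coords {s : Finset ι} (c : ι → ℝ) (h1 : ∀ j, 0 ≤ c j)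
    (h2 : ∀ j, j ∉ s → c j = 0) : xb + ∑ j, c j • r j ∈ PS xb r s :=
  ⟨c, h1, h2, rfl⟩

lemma TS_mono {s' s : Finset ι} (h : s' ⊆ s) : TS xb r C s' ⊆ TS xb r C s := by
  apply Set.add_subset_add_left
  apply convexHull_mono
  apply Set.biUnion_subset_biUnion_left
  intro j hj
  exact ⟨hj.1, h hj.2⟩

/-- scaling a recession direction -/
lemma recc_smul {A : Set (Fin n → ℝ)} {d : Fin n → ℝ} {c : ℝ} (hc : 0 ≤ c)
    (hd : d ∈ recc A) : c • d ∈ recc A := by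
  intro a ha t ht
  have h2 := hd a ha (t * c) (mul_nonneg ht hc)
  rw [smul_smul]
  exact h2

lemma recc_add {A : Set (Fin n → ℝ)} {d e : Fin n → ℝ}
    (hd : d ∈ recc A) (he : e ∈ recc A) : d + e ∈ recc A := by
  intro a ha t ht
  have h1 := hd a ha t ht
  have h2 := he _ h1 t ht
  have : a + t • (d + e) = a + t • d + t • e := by
    rw [smul_add]; abel
  rwa [this]

end Basic

section Rays

variable {xb : Fin n → ℝ} {r : ι → Fin n → ℝ} {C : Set (Fin n → ℝ)}

/-- the half-open ray parameter set -/
def Sray (xb : Fin n → ℝ) (v : Fin n → ℝ) (C : Set (Fin n → ℝ)) : Set ℝ :=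
  {l : ℝ | 0 ≤ l ∧ xb + l • v ∈ C}

lemma lamM_def (v : Fin n → ℝ) :
    lamM xb v C = sInf ((fun l : ℝ => (l : EReal)) '' Sray xb v C) := rfl

lemma lamP_def (v : Fin n → ℝ) :
    lamP xb v C = sSup ((fun l : ℝ => (l : EReal)) '' Sray xb v C) := rfl

/-- Around a parameter where the ray is in the open set `C`, a whole interval of parameters is. -/
lemma openC_around (hCopen : IsOpen C) {v : Fin n → ℝ} {t₀ : ℝ} (h : xb + t₀ • v ∈ C) :
    ∃ ε > 0, ∀ t : ℝ, |t - t₀| < ε → xb + t • v ∈ C := by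
  have hcont : Continuous fun t : ℝ => xb + t • v := by continuity
  have hmem : (fun t : ℝ => xb + t • v) ⁻¹' C ∈ nhds t₀ :=
    hcont.continuousAt.preimage_mem_nhds (hCopen.mem_nhds h)
  obtain ⟨ε, hε, hball⟩ := Metric.mem_nhds_iff.mp hmem
  refine ⟨ε, hε, fun t ht => hball ?_⟩
  simpa [Metric.mem_ball, Real.dist_eq] using ht

/-- Near the apex the ray is outside `C`. -/
lemma apex_gap (hxb : xb ∉ closure C) (v : Fin n → ℝ) :
    ∃ δ > 0, ∀ l : ℝ, |l| < δ → xb + l • v ∉ C := by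
  have hcont : Continuous fun t : ℝ => xb + t • v := by continuity
  have hmem : (fun t : ℝ => xb + t • v) ⁻¹' (closure C)ᶜ ∈ nhds 0 := by
    apply hcont.continuousAt.preimage_mem_nhds
    apply (isClosed_closure.isOpen_compl).mem_nhds
    simpa using hxb
  obtain ⟨δ, hδ, hball⟩ := Metric.mem_nhds_iff.mp hmem
  refine ⟨δ, hδ, fun l hl hmemC => ?_⟩
  have : xb + l • v ∈ (closure C)ᶜ := by
    apply hball; simpa [Metric.mem_ball, Real.dist_eq] using hl
  exact this (subset_closure hmemC)

lemma lamM_pos (hxb : xb ∉ closure C) (v : Fin n → ℝ) : 0 < lamM xb v C := by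
  obtain ⟨δ, hδ, hout⟩ := apex_gap hxb (C := C) v
  have hle : (δ : EReal) ≤ lamM xb v C := by
    apply le_sInf
    rintro b ⟨l, ⟨hl0, hlC⟩, rfl⟩
    have hδl : δ ≤ l := by
      by_contra h
      push_neg at h
      exact hout l (by rw [abs_of_nonneg hl0]; exact h) hlC
    show (δ : EReal) ≤ (l : EReal)
    exact_mod_cast hδl
  exact lt_of_lt_of_le (by exact_mod_cast hδ) hle

lemma lamM_le {v : Fin n → ℝ} {l : ℝ} (hl0 : 0 ≤ l) (hl : xb + l • v ∈ C) :
    lamM xb v C ≤ (l : EReal) :=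
  sInf_le ⟨l, ⟨hl0, hl⟩, rfl⟩

lemma le_lamP {v : Fin n → ℝ} {l : ℝ} (hl0 : 0 ≤ l) (hl : xb + l • v ∈ C) :
    (l : EReal) ≤ lamP xb v C :=
  le_sSup ⟨l, ⟨hl0, hl⟩, rfl⟩

/-- The infimum parameter is not attained (`C` open). -/
lemma lamM_not_mem (hCopen : IsOpen C) (hxb : xb ∉ closure C) {v : Fin n → ℝ}
    (hne : ∃ l : ℝ, 0 ≤ l ∧ xb + l • v ∈ C) :
    ∃ lm : ℝ, lamM xb v C = (lm : EReal) ∧ 0 < lm ∧ xb + lm • v ∉ C := by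
  obtain ⟨l₀, hl₀⟩ := hne
  have htop : lamM xb v C < ⊤ :=
    lt_of_le_of_lt (lamM_le hl₀.1 hl₀.2) (EReal.coe_lt_top l₀)
  have hpos := lamM_pos hxb (C := C) v
  have hbot : lamM xb v C ≠ ⊥ := fun h => absurd hpos (by rw [h]; exact not_lt.mpr bot_le)
  set lm := (lamM xb v C).toReal with hlm
  have hcoe : lamM xb v C = (lm : EReal) := (EReal.coe_toReal htop.ne hbot).symm
  have hlmpos : 0 < lm := by
    have := hpos; rw [hcoe] at this; exact_mod_cast this
  refine ⟨lm, hcoe, hlmpos, fun hmem => ?_⟩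
  obtain ⟨ε, hε, hball⟩ := openC_around hCopen (v := v) hmem
  have h1 : max (lm - ε / 2) (lm / 2) ∈ Sray xb v C := by
    constructor
    · have : 0 < lm / 2 := by linarith
      exact le_of_lt (lt_of_lt_of_le this (le_max_right _ _))
    · apply hball
      rw [abs_lt]
      constructor
      · have := le_max_left (lm - ε / 2) (lm / 2); linarith
      · have h2 : lm - ε / 2 ≤ lm := by linarith
        have h3 : lm / 2 ≤ lm := by linarith
        have := max_le h2 h3; linarith
  have hle := lamM_le (C := C) h1.1 h1.2
  rw [hcoe] at hle
  have hle' : lm ≤ max (lm - ε / 2) (lm / 2) := by exact_mod_cast hle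
  have := max_lt (by linarith : lm - ε / 2 < lm) (by linarith : lm / 2 < lm)
  linarith

/-- Points strictly between the two parameters are in `C`. -/
lemma interval_mem (hCconv : Convex ℝ C) {v : Fin n → ℝ} {l : ℝ}
    (h1 : lamM xb v C < (l : EReal)) (h2 : (l : EReal) < lamP xb v C) :
    0 ≤ l ∧ xb + l • v ∈ C := by
  obtain ⟨b, ⟨l₁, hl₁, rfl⟩, hb⟩ := sInf_lt_iff.mp h1
  obtain ⟨b, ⟨l₂, hl₂, rfl⟩, hb2⟩ := lt_sSup_iff.mp h2
  have hl₁l : l₁ < l := by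
    have : (l₁ : EReal) < (l : EReal) := hb
    exact_mod_cast this
  have hll₂ : l < l₂ := by
    have : (l : EReal) < (l₂ : EReal) := hb2
    exact_mod_cast this
  have hl0 : 0 ≤ l := le_trans hl₁.1 hl₁l.le
  refine ⟨hl0, ?_⟩
  have hd : 0 < l₂ - l₁ := by linarith
  set a := (l₂ - l) / (l₂ - l₁) with ha
  set b := (l - l₁) / (l₂ - l₁) with hb'
  have ha0 : 0 ≤ a := div_nonneg (by linarith) hd.le
  have hb0 : 0 ≤ b := div_nonneg (by linarith) hd.le
  have hne : l₂ - l₁ ≠ 0 := hd.ne'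
  have hab : a + b = 1 := by
    rw [ha, hb', ← add_div, div_eq_one_iff_eq hne]
    ring
  have hcomb := hCconv hl₁.2 hl₂.2 ha0 hb0 hab
  have hkey : a * l₁ + b * l₂ = l := by
    rw [ha, hb']
    field_simp
    ring
  have : a • (xb + l₁ • v) + b • (xb + l₂ • v) = xb + l • v := by
    rw [smul_add, smul_add, smul_smul, smul_smul]
    rw [show a • xb + (a * l₁) • v + (b • xb + (b * l₂) • v)
        = (a + b) • xb + (a * l₁ + b * l₂) • v by rw [add_smul, add_smul]; abel]
    rw [hab, hkey, one_smul]
  rwa [this] at hcomb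

/-- Beyond the supremum parameter, the ray is outside `C`. -/
lemma lamP_tail (hCopen : IsOpen C) (hxb : xb ∉ closure C) {v : Fin n → ℝ} {lp : ℝ}
    (hlp : lamP xb v C = (lp : EReal)) : ∀ t : ℝ, lp ≤ t → xb + t • v ∉ C := by
  intro t ht hmem
  have ht0 : 0 ≤ t := by
    by_contra h
    push_neg at h
    obtain ⟨δ, hδ, hout⟩ := apex_gap hxb (C := C) v
    by_cases habs : |t| < δ
    · exact hout t habs hmem
    · -- t < 0 and |t| ≥ δ; but then is xb + t•v ∈ C possible? t < 0 not in Sray anyway.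
      -- we need 0 ≤ t only to place t in Sray; get contradiction differently:
      -- Sray nonempty: lamP = lp means... we show lp ≥ δ > 0 > t ≥ lp, contradiction.
      exfalso
      -- lamP is a sup of a set of nonneg reals; if the set were empty lamP = ⊥ ≠ coe.
      have hne : (Sray xb v C).Nonempty := by
        by_contra hne
        rw [Set.not_nonempty_iff_eq_empty] at hne
        rw [lamP_def, hne, Set.image_empty, sSup_empty] at hlp
        exact (EReal.bot_lt_coe lp).ne hlp
      obtain ⟨l₀, hl₀⟩ := hne
      have := le_lamP (C := C) hl₀.1 hl₀.2
      rw [hlp] at this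
      have : l₀ ≤ lp := by exact_mod_cast this
      have : (0:ℝ) ≤ lp := le_trans hl₀.1 this
      linarith
  -- now t ∈ Sray
  have htS : t ∈ Sray xb v C := ⟨ht0, hmem⟩
  obtain ⟨ε, hε, hball⟩ := openC_around hCopen (v := v) hmem
  have h1 : t + ε / 2 ∈ Sray xb v C := by
    refine ⟨by linarith, hball _ ?_⟩
    rw [abs_lt]; constructor <;> linarith
  have := le_lamP (C := C) h1.1 h1.2
  rw [hlp] at this
  have : t + ε / 2 ≤ lp := by exact_mod_cast this
  linarith

/-- classification: a ray either misses `C` or is of type `N₁` or `N₂`. -/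
lemma not_N0_classify (hCopen : IsOpen C) (hxb : xb ∉ closure C) {j : ι}
    (hj : j ∉ N0set xb r C) : j ∈ N1set xb r C ∨ j ∈ N2set xb r C := by
  simp only [N0set, Set.mem_setOf_eq, not_forall] at hj
  obtain ⟨l₀, hl₀, hl₀C⟩ := hj
  push_neg at hl₀C
  have hl₀S : l₀ ∈ Sray xb (r j) C := ⟨hl₀, hl₀C⟩
  have hpos := lamM_pos hxb (C := C) (r j)
  have htop : lamM xb (r j) C < ⊤ :=
    lt_of_le_of_lt (lamM_le hl₀ hl₀C) (EReal.coe_lt_top l₀)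
  have hMP : lamM xb (r j) C < lamP xb (r j) C := by
    obtain ⟨δ, hδ, hout⟩ := apex_gap hxb (C := C) (r j)
    have hl₀δ : δ ≤ l₀ := by
      by_contra h
      push_neg at h
      exact hout l₀ (by rw [abs_of_nonneg hl₀]; exact h) hl₀C
    obtain ⟨ε, hε, hball⟩ := openC_around hCopen (v := r j) hl₀C
    have hl₀pos : 0 < l₀ := lt_of_lt_of_le hδ hl₀δ
    set ε' := min (ε / 2) (l₀ / 2) with hε'
    have hε'pos : 0 < ε' := lt_min (by linarith) (by linarith)
    have hm : l₀ - ε' ∈ Sray xb (r j) C := by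
      refine ⟨by
        have : ε' ≤ l₀ / 2 := min_le_right _ _
        have : 0 < l₀ := lt_of_lt_of_le hδ hl₀δ
        have : ε' ≤ l₀ / 2 := min_le_right _ _
        linarith, hball _ ?_⟩
      have : ε' ≤ ε / 2 := min_le_left _ _
      rw [abs_lt]; constructor <;> linarith
    have hp : l₀ + ε' ∈ Sray xb (r j) C := by
      refine ⟨by linarith, hball _ ?_⟩
      have : ε' ≤ ε / 2 := min_le_left _ _
      rw [abs_lt]; constructor <;> linarith
    calc lamM xb (r j) C ≤ ((l₀ - ε' : ℝ) : EReal) := lamM_le hm.1 hm.2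
      _ < ((l₀ + ε' : ℝ) : EReal) := by exact_mod_cast (by linarith : l₀ - ε' < l₀ + ε')
      _ ≤ lamP xb (r j) C := le_lamP hp.1 hp.2
  by_cases hP : lamP xb (r j) C = ⊤
  · exact Or.inl ⟨hpos, htop, hP⟩
  · exact Or.inr ⟨hpos, htop, hMP, lt_top_iff_ne_top.mpr hP⟩

end Rays

section LinAlg

variable {xb : Fin n → ℝ} {r : ι → Fin n → ℝ} {C : Set (Fin n → ℝ)}

lemma exists_g (hr : LinearIndependent ℝ r) :
    ∃ g : ι → (Fin n → ℝ) →ₗ[ℝ] ℝ, ∀ i j, g j (r i) = if i = j then 1 else 0 := by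
  obtain ⟨q, hq⟩ := Submodule.exists_isCompl (Submodule.span ℝ (Set.range r))
  refine ⟨fun j => ((Module.Basis.span hr).coord j).comp
      (Submodule.linearProjOfIsCompl _ q hq), fun i j => ?_⟩
  have hmem : r i ∈ Submodule.span ℝ (Set.range r) := Submodule.subset_span ⟨i, rfl⟩
  have h1 : (Submodule.linearProjOfIsCompl _ q hq) (r i)
      = (⟨r i, hmem⟩ : Submodule.span ℝ (Set.range r)) :=
    Submodule.linearProjOfIsCompl_apply_left hq ⟨r i, hmem⟩
  have h2 : (⟨r i, hmem⟩ : Submodule.span ℝ (Set.range r)) = Module.Basis.span hr i := by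
    apply Subtype.ext
    rw [Module.Basis.span_apply]
  rw [LinearMap.comp_apply, h1, h2, Module.Basis.coord_apply, Module.Basis.repr_self]
  rw [Finsupp.single_apply]

variable {g : ι → (Fin n → ℝ) →ₗ[ℝ] ℝ}

lemma coord_sum (hg : ∀ i j, g j (r i) = if i = j then 1 else 0)
    (c : ι → ℝ) (j : ι) : g j (∑ i, c i • r i) = c j := by
  rw [map_sum]
  simp only [map_smul, hg, smul_eq_mul, mul_ite, mul_one, mul_zero]
  rw [Finset.sum_ite_eq' Finset.univ j c]
  simp

lemma PS_coords (hg : ∀ i j, g j (r i) = if i = j then 1 else 0) {s : Finset ι}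
    {x : Fin n → ℝ} (hx : x ∈ PS xb r s) :
    (∀ j, 0 ≤ g j (x - xb)) ∧ (∀ j, j ∉ s → g j (x - xb) = 0)
      ∧ x = xb + ∑ j, g j (x - xb) • r j := by
  obtain ⟨c, h1, h2, rfl⟩ := hx
  have hxx : xb + ∑ i, c i • r i - xb = ∑ i, c i • r i := by abel
  have hco : ∀ j, g j (xb + ∑ i, c i • r i - xb) = c j := by
    intro j; rw [hxx, coord_sum hg]
  refine ⟨fun j => by rw [hco]; exact h1 j, fun j hj => by rw [hco]; exact h2 j hj, ?_⟩
  have : ∀ j ∈ Finset.univ, g j (xb + ∑ i, c i • r i - xb) • r j = c j • r j := by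
    intro j _; rw [hco]
  rw [Finset.sum_congr rfl this]

lemma PS_add {s : Finset ι} {a u : Fin n → ℝ} (haP : a ∈ PS xb r s) (e : ι → ℝ)
    (he0 : ∀ j, 0 ≤ e j) (hes : ∀ j, j ∉ s → e j = 0) (hu : u = ∑ j, e j • r j)
    {t : ℝ} (ht : 0 ≤ t) : a + t • u ∈ PS xb r s := by
  obtain ⟨c, hc1, hc2, rfl⟩ := haP
  refine ⟨fun j => c j + t * e j, fun j => add_nonneg (hc1 j) (mul_nonneg ht (he0 j)),
    fun j hj => by show c j + t * e j = 0; rw [hc2 j hj, hes j hj]; ring, ?_⟩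
  rw [hu, Finset.smul_sum, add_assoc, ← Finset.sum_add_distrib]
  congr 1
  apply Finset.sum_congr rfl
  intro j _
  rw [smul_smul, ← add_smul]

lemma ray_in_PB {u : Fin n → ℝ} (e : ι → ℝ) (he0 : ∀ j, 0 ≤ e j)
    (hu : u = ∑ j, e j • r j) : ∀ t : ℝ, 0 ≤ t → xb + t • u ∈ PBset xb r := by
  intro t ht
  refine ⟨fun j => t * e j, fun j => mul_nonneg ht (he0 j), ?_⟩
  congr 1
  rw [hu, Finset.smul_sum]
  apply Finset.sum_congr rfl
  intro j _
  rw [smul_smul]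

lemma slope_nonneg {c₀ m β T : ℝ} (h : ∀ t : ℝ, T ≤ t → β ≤ c₀ + t * m) : 0 ≤ m := by
  by_contra hm
  push_neg at hm
  have h1 := h (max T ((β - 1 - c₀) / m)) (le_max_left _ _)
  have h2 : max T ((β - 1 - c₀) / m) * m ≤ β - 1 - c₀ := by
    have := mul_le_mul_of_nonpos_right (le_max_right T ((β - 1 - c₀) / m)) hm.le
    rwa [div_mul_cancel₀ _ hm.ne] at this
  linarith

end LinAlg

section ReccLemmas

variable {xb : Fin n → ℝ} {r : ι → Fin n → ℝ} {C : Set (Fin n → ℝ)}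

lemma ray_mem_recc_closed {S : Set (Fin n → ℝ)} (hS : IsClosed S) (hconv : Convex ℝ S)
    {p d : Fin n → ℝ} (hp : ∀ t : ℝ, 0 ≤ t → p + t • d ∈ S) :
    ∀ a ∈ S, ∀ t : ℝ, 0 ≤ t → a + t • d ∈ S := by
  intro a ha t ht
  have hev : ∀ᶠ m : ℝ in Filter.atTop, a + t • d + (t / m) • (p - a) ∈ S := by
    filter_upwards [Filter.eventually_gt_atTop (max t 0)] with m hm
    have hm0 : 0 < m := lt_of_le_of_lt (le_max_right t 0) hm
    have hmt : t < m := lt_of_le_of_lt (le_max_left t 0) hm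
    have hθ0 : 0 ≤ t / m := div_nonneg ht hm0.le
    have hθ1 : t / m ≤ 1 := by rw [div_le_one hm0]; exact hmt.le
    have hcomb := hconv ha (hp m hm0.le) (by linarith : (0:ℝ) ≤ 1 - t / m) hθ0 (by ring)
    have heq : (1 - t / m) • a + (t / m) • (p + m • d) = a + t • d + (t / m) • (p - a) := by
      have hmm : (t / m) * m = t := div_mul_cancel₀ t hm0.ne'
      rw [sub_smul, one_smul, smul_add, smul_smul, hmm, smul_sub]
      abel
    rwa [heq] at hcomb
  have hlim : Filter.Tendsto (fun m : ℝ => a + t • d + (t / m) • (p - a))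
      Filter.atTop (nhds (a + t • d)) := by
    have h0 : Filter.Tendsto (fun m : ℝ => t / m) Filter.atTop (nhds 0) :=
      Filter.Tendsto.const_div_atTop Filter.tendsto_id t
    have := (h0.smul_const (p - a)).const_add (a + t • d)
    simpa using this
  exact hS.mem_of_tendsto hlim hev

lemma hits_mem_recc (hCopen : IsOpen C) (hCconv : Convex ℝ C) {s : Finset ι}
    {u : Fin n → ℝ} (e : ι → ℝ) (he0 : ∀ j, 0 ≤ e j) (hes : ∀ j, j ∉ s → e j = 0)
    (hu : u = ∑ j, e j • r j)
    (hhit : ∀ T : ℝ, ∃ t, T ≤ t ∧ xb + t • u ∈ C) :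
    u ∈ recc (PS xb r s ∩ C) := by
  rintro a ⟨haP, haC⟩ τ hτ
  refine ⟨PS_add haP e he0 hes hu hτ, ?_⟩
  by_cases hτ0 : τ = 0
  · subst hτ0; simpa using haC
  have hτpos : 0 < τ := lt_of_le_of_ne hτ (Ne.symm hτ0)
  have hwlim : Filter.Tendsto (fun t : ℝ => (1 - τ / t)⁻¹ • (a - (τ / t) • xb))
      Filter.atTop (nhds a) := by
    have h0 : Filter.Tendsto (fun t : ℝ => τ / t) Filter.atTop (nhds 0) :=
      Filter.Tendsto.const_div_atTop Filter.tendsto_id τ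
    have h1 : Filter.Tendsto (fun t : ℝ => (1 - τ / t)⁻¹) Filter.atTop (nhds 1) := by
      have := ((tendsto_const_nhds (x := (1:ℝ)) (f := Filter.atTop)).sub h0).inv₀ (by norm_num)
      simpa using this
    have h2 : Filter.Tendsto (fun t : ℝ => a - (τ / t) • xb) Filter.atTop (nhds a) := by
      have := (tendsto_const_nhds (x := a) (f := Filter.atTop)).sub (h0.smul_const xb)
      simpa using this
    have := h1.smul h2
    simpa using this
  have hev : ∀ᶠ t : ℝ in Filter.atTop, (1 - τ / t)⁻¹ • (a - (τ / t) • xb) ∈ C :=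
    hwlim (hCopen.mem_nhds haC)
  have hfreq : ∃ᶠ t : ℝ in Filter.atTop, xb + t • u ∈ C := by
    rw [Filter.frequently_atTop]
    intro T; obtain ⟨t, h1, h2⟩ := hhit T; exact ⟨t, h1, h2⟩
  obtain ⟨t, htu, htw, htτ⟩ :=
    (hfreq.and_eventually (hev.and (Filter.eventually_gt_atTop τ))).exists
  have ht0 : 0 < t := lt_trans hτpos htτ
  have hθ1 : τ / t < 1 := (div_lt_one ht0).mpr htτ
  have hθ0 : 0 ≤ τ / t := div_nonneg hτ ht0.le
  have hpos : (0:ℝ) < 1 - τ / t := by linarith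
  have key : a + τ • u = (1 - τ / t) • ((1 - τ / t)⁻¹ • (a - (τ / t) • xb))
      + (τ / t) • (xb + t • u) := by
    rw [smul_smul, mul_inv_cancel₀ hpos.ne', one_smul, smul_add, smul_smul,
      div_mul_cancel₀ τ ht0.ne']
    abel
  rw [key]
  exact hCconv htw htu hpos.le hθ0 (by ring)

lemma tail_miss (hCopen : IsOpen C) (hCconv : Convex ℝ C) {s : Finset ι}
    {u : Fin n → ℝ} (e : ι → ℝ) (he0 : ∀ j, 0 ≤ e j) (hes : ∀ j, j ∉ s → e j = 0)
    (hu : u = ∑ j, e j • r j) (hnot : u ∉ recc (PS xb r s ∩ C)) :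
    ∃ T : ℝ, ∀ t : ℝ, T ≤ t → xb + t • u ∉ C := by
  by_contra h
  push_neg at h
  exact hnot (hits_mem_recc hCopen hCconv e he0 hes hu h)

lemma psi_tail_nonneg (ψ : (Fin n → ℝ) →L[ℝ] ℝ) {β : ℝ}
    (hval : ∀ y ∈ PBset xb r \ C, β ≤ ψ y) {u : Fin n → ℝ} (e : ι → ℝ)
    (he0 : ∀ j, 0 ≤ e j) (hu : u = ∑ j, e j • r j)
    {T : ℝ} (htail : ∀ t : ℝ, T ≤ t → xb + t • u ∉ C) : 0 ≤ ψ u := by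
  apply slope_nonneg (c₀ := ψ xb) (β := β) (T := max T 0)
  intro t ht
  have h1 : xb + t • u ∈ PBset xb r := ray_in_PB e he0 hu t (le_trans (le_max_right T 0) ht)
  have h2 := hval _ ⟨h1, htail t (le_trans (le_max_left T 0) ht)⟩
  calc β ≤ ψ (xb + t • u) := h2
    _ = ψ xb + t * ψ u := by rw [map_add, map_smul]; simp

end ReccLemmas


section KChar

variable {xb : Fin n → ℝ} {r : ι → Fin n → ℝ} {C : Set (Fin n → ℝ)}
variable {g : ι → (Fin n → ℝ) →ₗ[ℝ] ℝ}

/-- Explicit description of the recession cone of `P_s ∩ C`. -/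
def KH (r : ι → Fin n → ℝ) (C : Set (Fin n → ℝ)) (g : ι → (Fin n → ℝ) →ₗ[ℝ] ℝ)
    (s : Finset ι) : Set (Fin n → ℝ) :=
  {d | (∀ j, 0 ≤ g j d) ∧ (∀ j, j ∉ s → g j d = 0) ∧ d = ∑ j, g j d • r j
    ∧ ∀ a ∈ closure C, ∀ t : ℝ, 0 ≤ t → a + t • d ∈ closure C}

lemma K_eq_KH (hCopen : IsOpen C) (hCconv : Convex ℝ C)
    (hg : ∀ i j, g j (r i) = if i = j then 1 else 0) {s : Finset ι}
    (hne : (PS xb r s ∩ C).Nonempty) :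
    recc (PS xb r s ∩ C) = KH r C g s := by
  obtain ⟨a₀, ha₀P, ha₀C⟩ := hne
  ext d
  constructor
  · intro hd
    have hray : ∀ t : ℝ, 0 ≤ t → a₀ + t • d ∈ PS xb r s ∩ C :=
      fun t ht => hd a₀ ⟨ha₀P, ha₀C⟩ t ht
    have hc := PS_coords hg ha₀P
    have hlin : ∀ t : ℝ, ∀ j, g j (a₀ + t • d - xb) = g j (a₀ - xb) + t * g j d := by
      intro t j
      have h : a₀ + t • d - xb = (a₀ - xb) + t • d := by abel
      rw [h, map_add, map_smul]; simp
    have hct : ∀ t : ℝ, 0 ≤ t → ∀ j,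
        (0 ≤ g j (a₀ - xb) + t * g j d ∧ (j ∉ s → g j (a₀ - xb) + t * g j d = 0)) := by
      intro t ht j
      have h := PS_coords hg (hray t ht).1
      exact ⟨by rw [← hlin]; exact h.1 j, fun hj => by rw [← hlin]; exact h.2.1 j hj⟩
    refine ⟨?_, ?_, ?_, ?_⟩
    · intro j
      apply slope_nonneg (c₀ := g j (a₀ - xb)) (β := 0) (T := 0)
      intro t ht; have := (hct t ht j).1; linarith
    · intro j hj
      have h0 := (hct 0 le_rfl j).2 hj
      have h1 := (hct 1 zero_le_one j).2 hj
      nlinarith [h0, h1]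
    · have h1 := PS_coords hg (hray 1 zero_le_one).1
      have hsum : ∑ j, g j d • r j
          = ∑ j, (g j (a₀ + (1:ℝ) • d - xb) • r j - g j (a₀ - xb) • r j) := by
        apply Finset.sum_congr rfl
        intro j _
        rw [hlin, add_smul, one_mul]
        abel
      set S1 := ∑ j, g j (a₀ + (1:ℝ) • d - xb) • r j with hS1
      set S2 := ∑ j, g j (a₀ - xb) • r j with hS2
      have e1 : a₀ + (1:ℝ) • d = xb + S1 := h1.2.2
      have e2 : a₀ = xb + S2 := hc.2.2
      rw [hsum, Finset.sum_sub_distrib]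
      rw [show (∑ j, g j (a₀ + (1:ℝ) • d - xb) • r j) = S1 from rfl,
        show (∑ j, g j (a₀ - xb) • r j) = S2 from rfl]
      have : d = (a₀ + (1:ℝ) • d) - a₀ := by rw [one_smul]; abel
      rw [this, e1, e2]
      abel
    · exact fun a ha t ht => ray_mem_recc_closed isClosed_closure hCconv.closure
        (fun t' ht' => subset_closure (hray t' ht').2) a ha t ht
  · rintro ⟨h1, h2, h3, h4⟩
    rintro a ⟨haP, haC⟩ t ht
    refine ⟨PS_add haP (fun j => g j d) h1 h2 h3 ht, ?_⟩
    have hz : a + (2 * t) • d ∈ closure C :=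
      h4 a (subset_closure haC) (2 * t) (by linarith)
    have hmem := hCconv.combo_interior_closure_mem_interior
        (x := a) (y := a + (2 * t) • d)
        (by rw [hCopen.interior_eq]; exact haC) hz
        (by norm_num : (0:ℝ) < 1/2) (by norm_num : (0:ℝ) ≤ 1/2) (by norm_num)
    have heq : (1/2 : ℝ) • a + (1/2 : ℝ) • (a + (2 * t) • d) = a + t • d := by
      rw [smul_add, smul_smul, show (1/2 : ℝ) * (2 * t) = t by ring, ← add_assoc,
        ← add_smul]
      try norm_num
    rw [heq, hCopen.interior_eq] at hmem
    exact hmem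

lemma KH_closed (s : Finset ι) : IsClosed (KH r C g s) := by
  have hgc : ∀ j, Continuous fun d : Fin n → ℝ => g j d :=
    fun j => (g j).continuous_of_finiteDimensional
  have h1 : IsClosed {d : Fin n → ℝ | ∀ j, 0 ≤ g j d} := by
    rw [Set.setOf_forall]
    exact isClosed_iInter fun j => isClosed_le continuous_const (hgc j)
  have h2 : IsClosed {d : Fin n → ℝ | ∀ j, j ∉ s → g j d = 0} := by
    rw [Set.setOf_forall]
    apply isClosed_iInter
    intro j
    by_cases hj : j ∈ s
    · have : {d : Fin n → ℝ | j ∉ s → g j d = 0} = Set.univ := by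
        ext d; simp [hj]
      rw [this]; exact isClosed_univ
    · have : {d : Fin n → ℝ | j ∉ s → g j d = 0} = {d | g j d = 0} := by
        ext d; simp [hj]
      rw [this]; exact isClosed_eq (hgc j) continuous_const
  have h3 : IsClosed {d : Fin n → ℝ | d = ∑ j, g j d • r j} := by
    apply isClosed_eq continuous_id
    exact continuous_finset_sum _ fun j _ => (hgc j).smul continuous_const
  have h4 : IsClosed {d : Fin n → ℝ |
      ∀ a ∈ closure C, ∀ t : ℝ, 0 ≤ t → a + t • d ∈ closure C} := by
    rw [Set.setOf_forall]
    apply isClosed_iInter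
    intro a
    by_cases ha : a ∈ closure C
    · have : {d : Fin n → ℝ | a ∈ closure C → ∀ t : ℝ, 0 ≤ t → a + t • d ∈ closure C}
          = ⋂ t : ℝ, {d | 0 ≤ t → a + t • d ∈ closure C} := by
        ext d; simp [ha]
      rw [this]
      apply isClosed_iInter
      intro t
      by_cases ht : 0 ≤ t
      · have : {d : Fin n → ℝ | 0 ≤ t → a + t • d ∈ closure C}
            = (fun d : Fin n → ℝ => a + t • d) ⁻¹' closure C := by
          ext d; simp [ht]
        rw [this]
        exact isClosed_closure.preimage (by continuity)
      · have : {d : Fin n → ℝ | 0 ≤ t → a + t • d ∈ closure C} = Set.univ := by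
          ext d; simp [ht]
        rw [this]; exact isClosed_univ
    · have : {d : Fin n → ℝ | a ∈ closure C → ∀ t : ℝ, 0 ≤ t → a + t • d ∈ closure C}
          = Set.univ := by
        ext d; simp [ha]
      rw [this]; exact isClosed_univ
  have hKH : KH r C g s = {d : Fin n → ℝ | ∀ j, 0 ≤ g j d}
      ∩ ({d | ∀ j, j ∉ s → g j d = 0} ∩ ({d | d = ∑ j, g j d • r j}
      ∩ {d | ∀ a ∈ closure C, ∀ t : ℝ, 0 ≤ t → a + t • d ∈ closure C})) := by
    ext d
    simp only [KH, Set.mem_setOf_eq, Set.mem_inter_iff]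
    try tauto
  rw [hKH]
  exact h1.inter (h2.inter (h3.inter h4))

lemma KS_mono (hCopen : IsOpen C) (hCconv : Convex ℝ C)
    (hg : ∀ i j, g j (r i) = if i = j then 1 else 0) {s' s : Finset ι} (hss : s' ⊆ s)
    (hne' : (PS xb r s' ∩ C).Nonempty) (hne : (PS xb r s ∩ C).Nonempty) :
    recc (PS xb r s' ∩ C) ⊆ recc (PS xb r s ∩ C) := by
  rw [K_eq_KH hCopen hCconv hg hne', K_eq_KH hCopen hCconv hg hne]
  rintro d ⟨h1, h2, h3, h4⟩
  exact ⟨h1, fun j hj => h2 j (fun hj' => hj (hss hj')), h3, h4⟩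

end KChar


section Main

variable {xb : Fin n → ℝ} {r : ι → Fin n → ℝ} {C : Set (Fin n → ℝ)}
variable {g : ι → (Fin n → ℝ) →ₗ[ℝ] ℝ}

lemma single_sum (r : ι → Fin n → ℝ) (j : ι) :
    r j = ∑ i, (if i = j then (1:ℝ) else 0) • r i := by
  simp only [ite_smul, one_smul, zero_smul]
  rw [Finset.sum_ite_eq' Finset.univ j (fun i => r i)]
  simp

lemma xb_mem_PB : xb ∈ PBset xb r :=
  ⟨fun _ => 0, fun _ => le_rfl, by simp⟩

lemma TS_subset (hCconv : Convex ℝ C) {s : Finset ι} :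
    TS xb r C s ⊆ PBset xb r ∩ C := by
  rintro z ⟨x₁, hx₁, y, hy, rfl⟩
  rw [Set.mem_singleton_iff] at hx₁
  rw [hx₁]
  set D : Set (Fin n → ℝ) := {y | xb + y ∈ C ∧ ∃ e : ι → ℝ, (∀ j, 0 ≤ e j)
    ∧ y = ∑ j, e j • r j} with hD
  have hDconv : Convex ℝ D := by
    rintro y₁ ⟨hy₁C, e₁, he₁, rfl⟩ y₂ ⟨hy₂C, e₂, he₂, rfl⟩ a b ha hb hab
    constructor
    · have heq : xb + (a • ∑ j, e₁ j • r j + b • ∑ j, e₂ j • r j)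
          = a • (xb + ∑ j, e₁ j • r j) + b • (xb + ∑ j, e₂ j • r j) := by
        rw [smul_add, smul_add, show a • xb + a • ∑ j, e₁ j • r j
          + (b • xb + b • ∑ j, e₂ j • r j) = (a + b) • xb
          + (a • ∑ j, e₁ j • r j + b • ∑ j, e₂ j • r j) by rw [add_smul]; abel, hab,
          one_smul]
      rw [heq]
      exact hCconv hy₁C hy₂C ha hb hab
    · refine ⟨fun j => a * e₁ j + b * e₂ j,
        fun j => add_nonneg (mul_nonneg ha (he₁ j)) (mul_nonneg hb (he₂ j)), ?_⟩
      rw [Finset.smul_sum, Finset.smul_sum, ← Finset.sum_add_distrib]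
      apply Finset.sum_congr rfl
      intro j _
      rw [smul_smul, smul_smul, ← add_smul]
  have hUD : (⋃ j ∈ (N1set xb r C ∪ N2set xb r C) ∩ {i | i ∈ s},
      {y : Fin n → ℝ | ∃ l : ℝ, lamM xb (r j) C < (l : EReal)
        ∧ (l : EReal) < lamP xb (r j) C ∧ y = l • r j}) ⊆ D := by
    rintro u hu
    rw [Set.mem_iUnion₂] at hu
    obtain ⟨j, _, l, hl1, hl2, rfl⟩ := hu
    obtain ⟨hl0, hlC⟩ := interval_mem hCconv hl1 hl2
    refine ⟨hlC, fun i => if i = j then l else 0,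
      fun i => by dsimp only; split <;> simp [hl0], ?_⟩
    simp only [ite_smul, zero_smul]
    rw [Finset.sum_ite_eq' Finset.univ j (fun i => l • r i)]
    simp
  have hyD : y ∈ D := convexHull_min hUD hDconv hy
  obtain ⟨hyC, e, he0, hesum⟩ := hyD
  exact ⟨⟨e, he0, by rw [hesum]⟩, hyC⟩

lemma A_sub_C (hCconv : Convex ℝ C) :
    Tset xb r C + recc (PBset xb r ∩ C) ⊆ C := by
  rintro a ⟨t, ht, k, hk, rfl⟩
  show t + k ∈ C
  have ht' : t ∈ TS xb r C (Finset.univ : Finset ι) := by rw [TS_univ]; exact ht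
  have htc : t ∈ PBset xb r ∩ C := TS_subset hCconv ht'
  have h2 := hk t htc (1:ℝ) zero_le_one
  rw [one_smul] at h2
  exact h2.2

/-- The core "dual" lemma: any valid inequality for `P \ C` is satisfied by every point
of `P_s ∩ C` outside `T_s + recc (P_s ∩ C)`. -/
lemma DML (hr : LinearIndependent ℝ r)
    (hg : ∀ i j, g j (r i) = if i = j then 1 else 0)
    (hCopen : IsOpen C) (hCconv : Convex ℝ C) (hxb : xb ∉ closure C)
    (ψ : (Fin n → ℝ) →L[ℝ] ℝ) (β : ℝ) (hval : ∀ y ∈ PBset xb r \ C, β ≤ ψ y)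
    (s : Finset ι) :
    ∀ x ∈ PS xb r s, x ∈ C → ψ x < β →
      x ∈ TS xb r C s + recc (PS xb r s ∩ C) := by
  induction s using Finset.strongInduction with
  | _ s IH =>
  intro x hxPS hxC hψx
  have hC0 : xb ∉ C := fun h => hxb (subset_closure h)
  have hne : (PS xb r s ∩ C).Nonempty := ⟨x, hxPS, hxC⟩
  have hc := PS_coords hg hxPS
  by_cases hA : ∃ d ∈ recc (PS xb r s ∩ C), d ≠ 0 ∧ 0 ≤ ψ d
  · -- Case A : drop down to a facet along a recession direction of nonnegative ψ value.
    obtain ⟨d, hdK, hd0, hψd⟩ := hA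
    have hdH : d ∈ KH r C g s := (K_eq_KH hCopen hCconv hg hne) ▸ hdK
    obtain ⟨hd1, hd2, hd3, _⟩ := hdH
    have hex : ∃ j ∈ s, 0 < g j d := by
      by_contra hno
      push_neg at hno
      apply hd0
      rw [hd3]
      apply Finset.sum_eq_zero
      intro j _
      by_cases hjs : j ∈ s
      · rw [le_antisymm (hno j hjs) (hd1 j), zero_smul]
      · rw [hd2 j hjs, zero_smul]
    have hFne : (s.filter (fun j => 0 < g j d)).Nonempty := by
      obtain ⟨j, hj1, hj2⟩ := hex
      exact ⟨j, Finset.mem_filter.mpr ⟨hj1, hj2⟩⟩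
    set F := s.filter (fun j => 0 < g j d) with hF
    set sstar := F.inf' hFne (fun j => g j (x - xb) / g j d) with hsstar
    have hs0 : 0 ≤ sstar := by
      apply Finset.le_inf'
      intro j hj
      exact div_nonneg (hc.1 j) (Finset.mem_filter.mp hj).2.le
    obtain ⟨j₀, hj₀F, hj₀⟩ := Finset.exists_mem_eq_inf' hFne (fun j => g j (x - xb) / g j d)
    have hj₀s : j₀ ∈ s := (Finset.mem_filter.mp hj₀F).1
    have hj₀pos : 0 < g j₀ d := (Finset.mem_filter.mp hj₀F).2
    set q := x - sstar • d with hq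
    have hqPS : q ∈ PS xb r (s.erase j₀) := by
      refine ⟨fun j => g j (x - xb) - sstar * g j d, ?_, ?_, ?_⟩
      · intro j
        dsimp only
        by_cases hjF : j ∈ F
        · have hpos := (Finset.mem_filter.mp hjF).2
          have h2 : sstar ≤ g j (x - xb) / g j d := by
            rw [hsstar]; exact Finset.inf'_le _ hjF
          have h3 := (le_div_iff₀ hpos).mp h2
          linarith
        · by_cases hjs : j ∈ s
          · have : g j d = 0 := by
              have := hd1 j
              by_contra hne0
              exact hjF (Finset.mem_filter.mpr ⟨hjs, lt_of_le_of_ne this (Ne.symm hne0)⟩)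
            rw [this, mul_zero, sub_zero]
            exact hc.1 j
          · rw [hc.2.1 j hjs, hd2 j hjs, mul_zero, sub_zero]
      · intro j hj
        dsimp only
        rw [Finset.mem_erase] at hj
        push_neg at hj
        by_cases hjj : j = j₀
        · subst hjj
          have hj₀' : sstar = g j (x - xb) / g j d := by rw [hsstar]; exact hj₀
          rw [hj₀', div_mul_cancel₀ _ hj₀pos.ne']
          ring
        · rw [hc.2.1 j (hj hjj), hd2 j (hj hjj), mul_zero, sub_zero]
      · have : q = xb + (∑ j, g j (x - xb) • r j) - sstar • ∑ j, g j d • r j := by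
          rw [hq]
          nth_rewrite 1 [hc.2.2, hd3]
          abel
        rw [this, Finset.smul_sum, add_sub_assoc, ← Finset.sum_sub_distrib]
        congr 1
        apply Finset.sum_congr rfl
        intro j _
        rw [smul_smul, ← sub_smul]
    have hψq_eq : ψ q = ψ x - sstar * ψ d := by
      rw [hq, map_sub, map_smul]
      simp
    by_cases hqC : q ∈ C
    · by_cases hψq : ψ q < β
      · have hqTK := IH (s.erase j₀) (Finset.erase_ssubset hj₀s) q hqPS hqC hψq
        rw [Set.mem_add] at hqTK
        obtain ⟨tt, htt, kk, hkk, hqe⟩ := hqTK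
        have hxeq : x = tt + (kk + sstar • d) := by
          have hx' : x = q + sstar • d := by rw [hq]; abel
          rw [hx', ← hqe]
          abel
        rw [hxeq]
        refine Set.add_mem_add (TS_mono (Finset.erase_subset j₀ s) htt) ?_
        exact recc_add
          (KS_mono hCopen hCconv hg (Finset.erase_subset j₀ s) ⟨q, hqPS, hqC⟩ hne hkk)
          (recc_smul hs0 hdK)
      · exfalso
        push_neg at hψq
        have := mul_nonneg hs0 hψd
        rw [hψq_eq] at hψq
        linarith
    · exfalso
      have hq2 := hval q ⟨PS_subset_PB hqPS, hqC⟩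
      have := mul_nonneg hs0 hψd
      rw [hψq_eq] at hq2
      linarith
  · push_neg at hA
    have hKneg : ∀ d ∈ recc (PS xb r s ∩ C), d ≠ 0 → ψ d < 0 := by
      intro d hd hd0
      have := hA d hd hd0
      linarith
    by_cases hK0 : ∀ d ∈ recc (PS xb r s ∩ C), d = 0
    · -- Case B1 : the recession cone is trivial, use the radial chord.
      exfalso
      set v := x - xb with hv
      have hxxb : x ≠ xb := fun h => hC0 (h ▸ hxC)
      have hv0 : v ≠ 0 := sub_ne_zero.mpr hxxb
      have hveq : v = ∑ j, g j (x - xb) • r j := by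
        rw [hv]
        nth_rewrite 1 [hc.2.2]
        abel
      have h1S : (1:ℝ) ∈ Sray xb v C := by
        refine ⟨zero_le_one, ?_⟩
        have : xb + (1:ℝ) • v = x := by rw [hv, one_smul]; abel
        rw [this]; exact hxC
      have h0S : (0:ℝ) ∉ Sray xb v C := fun h => hC0 (by simpa using h.2)
      have hSne : (Sray xb v C).Nonempty := ⟨1, h1S⟩
      have hbddB : BddBelow (Sray xb v C) := ⟨0, fun t ht => ht.1⟩
      have hbddA : BddAbove (Sray xb v C) := by
        by_contra hnb
        rw [not_bddAbove_iff] at hnb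
        have hhit : ∀ T : ℝ, ∃ t, T ≤ t ∧ xb + t • v ∈ C := by
          intro T
          obtain ⟨t, htS, hTt⟩ := hnb T
          exact ⟨t, hTt.le, htS.2⟩
        have := hits_mem_recc hCopen hCconv (fun j => g j (x - xb)) hc.1 hc.2.1 hveq hhit
        exact hv0 (hK0 v this)
      set a := sInf (Sray xb v C) with ha
      set b := sSup (Sray xb v C) with hb
      have ha1 : a ≤ 1 := csInf_le hbddB h1S
      have h1b : 1 ≤ b := le_csSup hbddA h1S
      have ha0 : 0 ≤ a := le_csInf hSne (fun t ht => ht.1)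
      have hanot : a ∉ Sray xb v C := by
        intro haS
        have hapos : 0 < a := by
          rcases lt_or_eq_of_le ha0 with h | h
          · exact h
          · exact absurd (h ▸ haS) h0S
        obtain ⟨ε, hε, hball⟩ := openC_around hCopen haS.2
        have ht'S : a - min (ε/2) (a/2) ∈ Sray xb v C := by
          have hmin : 0 < min (ε/2) (a/2) := lt_min (by linarith) (by linarith)
          have hminle : min (ε/2) (a/2) ≤ a/2 := min_le_right _ _
          have hminle2 : min (ε/2) (a/2) ≤ ε/2 := min_le_left _ _
          refine ⟨by linarith, hball _ ?_⟩
          rw [abs_lt]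
          constructor <;> linarith
        have := csInf_le hbddB ht'S
        have hmin : 0 < min (ε/2) (a/2) := lt_min (by linarith) (by linarith)
        rw [← ha] at this
        linarith
      have hbnot : b ∉ Sray xb v C := by
        intro hbS
        obtain ⟨ε, hε, hball⟩ := openC_around hCopen hbS.2
        have ht'S : b + ε/2 ∈ Sray xb v C := by
          refine ⟨by have := hbS.1; linarith, hball _ ?_⟩
          rw [abs_lt]; constructor <;> linarith
        have := le_csSup hbddA ht'S
        rw [← hb] at this
        linarith
      have ha1' : a < 1 := lt_of_le_of_ne ha1 (fun h => hanot (h ▸ h1S))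
      have h1b' : 1 < b := lt_of_le_of_ne h1b (fun h => hbnot (h ▸ h1S))
      have hb0 : 0 ≤ b := by linarith
      have hyaPB : xb + a • v ∈ PBset xb r := ray_in_PB (fun j => g j (x - xb)) hc.1 hveq a ha0
      have hybPB : xb + b • v ∈ PBset xb r := ray_in_PB (fun j => g j (x - xb)) hc.1 hveq b hb0
      have hyaC : xb + a • v ∉ C := fun h => hanot ⟨ha0, h⟩
      have hybC : xb + b • v ∉ C := fun h => hbnot ⟨hb0, h⟩
      have hψa := hval _ ⟨hyaPB, hyaC⟩
      have hψb := hval _ ⟨hybPB, hybC⟩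
      have hba : 0 < b - a := by linarith
      set θ := (b - 1)/(b - a) with hθ
      have hθ0 : 0 ≤ θ := div_nonneg (by linarith) hba.le
      have hθ1 : θ ≤ 1 := by
        rw [hθ, div_le_one hba]
        linarith
      have hscal : θ * a + (1 - θ) * b = 1 := by
        rw [hθ]
        field_simp
        ring
      have hxcomb : x = θ • (xb + a • v) + (1 - θ) • (xb + b • v) := by
        have hcomb : θ • (xb + a • v) + (1 - θ) • (xb + b • v)
            = (θ + (1 - θ)) • xb + (θ * a + (1 - θ) * b) • v := by
          rw [smul_add, smul_add, smul_smul, smul_smul, add_smul, add_smul]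
          abel
        rw [hcomb, hscal, show θ + (1 - θ) = 1 by ring, one_smul, one_smul]
        rw [hv]; abel
      have hψxeq : ψ x = θ * ψ (xb + a • v) + (1 - θ) * ψ (xb + b • v) := by
        rw [hxcomb, map_add, map_smul, map_smul]
        simp
      have h1 := mul_le_mul_of_nonneg_left hψa hθ0
      have h2 := mul_le_mul_of_nonneg_left hψb (by linarith : 0 ≤ 1 - θ)
      nlinarith
    · push_neg at hK0
      obtain ⟨k, hkK, hk0⟩ := hK0
      by_cases hFull : ∀ u : Fin n → ℝ,
          (∃ e : ι → ℝ, (∀ j, 0 ≤ e j) ∧ (∀ j, j ∉ s → e j = 0) ∧ u = ∑ j, e j • r j) →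
          u ∈ recc (PS xb r s ∩ C)
      · -- Case B2 : every coordinate-nonnegative direction is a recession direction.
        set lm : ι → ℝ := fun j => (lamM xb (r j) C).toReal with hlm
        have hray : ∀ j ∈ s, j ∈ N1set xb r C ∧ lamM xb (r j) C = ((lm j : ℝ) : EReal)
            ∧ 0 < lm j ∧ xb + lm j • r j ∉ C := by
          intro j hjs
          have hsingle : ∃ e : ι → ℝ, (∀ i, 0 ≤ e i) ∧ (∀ i, i ∉ s → e i = 0)
              ∧ r j = ∑ i, e i • r i := by
            refine ⟨fun i => if i = j then 1 else 0, fun i => by dsimp only; split <;> norm_num,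
              fun i hi => by
                have : i ≠ j := fun h => hi (h ▸ hjs)
                simp [this], single_sum r j⟩
          obtain ⟨e, he0, hes, heu⟩ := hsingle
          have hrK : r j ∈ recc (PS xb r s ∩ C) := hFull (r j) ⟨e, he0, hes, heu⟩
          have hψrj : ψ (r j) < 0 := hKneg _ hrK (hr.ne_zero j)
          have hjN0 : j ∉ N0set xb r C := by
            intro hN0
            have h0 : 0 ≤ ψ (r j) :=
              psi_tail_nonneg ψ hval e he0 heu (T := 0) (fun t ht => hN0 t ht)
            linarith
          have hjN1 : j ∈ N1set xb r C := by
            rcases not_N0_classify hCopen hxb hjN0 with h | hN2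
            · exact h
            · exfalso
              obtain ⟨hm0, _, hmP, hPlt⟩ := hN2
              have hPbot : lamP xb (r j) C ≠ ⊥ := by
                intro h
                rw [h] at hmP
                exact absurd hmP (by simp)
              set lp := (lamP xb (r j) C).toReal with hlp
              have hlpc : lamP xb (r j) C = ((lp : ℝ) : EReal) :=
                (EReal.coe_toReal hPlt.ne hPbot).symm
              have htail := lamP_tail hCopen hxb hlpc
              have h0 : 0 ≤ ψ (r j) :=
                psi_tail_nonneg ψ hval e he0 heu (T := lp) htail
              linarith
          simp only [N0set, Set.mem_setOf_eq, not_forall] at hjN0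
          obtain ⟨l₀, hl₀, hl₀C⟩ := hjN0
          push_neg at hl₀C
          obtain ⟨lm', hlm', hlm'pos, hlm'C⟩ :=
            lamM_not_mem hCopen hxb ⟨l₀, hl₀, hl₀C⟩
          have hlmj : lm j = lm' := by
            rw [hlm]
            dsimp only
            rw [hlm', EReal.toReal_coe]
          rw [hlmj]
          exact ⟨hjN1, hlm', hlm'pos, hlm'C⟩
        set μ : ι → ℝ := fun j => g j (x - xb) / lm j with hμ
        set ℓ : ℝ := ∑ j, μ j with hℓ
        have hμ0 : ∀ j, 0 ≤ μ j := by
          intro j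
          by_cases hjs : j ∈ s
          · exact div_nonneg (hc.1 j) (hray j hjs).2.2.1.le
          · rw [hμ]; dsimp only; rw [hc.2.1 j hjs]; simp
        have hcμ : ∀ j, g j (x - xb) = μ j * lm j := by
          intro j
          by_cases hjs : j ∈ s
          · rw [hμ]; dsimp only
            rw [div_mul_cancel₀ _ (hray j hjs).2.2.1.ne']
          · rw [hμ]; dsimp only; rw [hc.2.1 j hjs]; simp
        have hℓ0 : 0 ≤ ℓ := Finset.sum_nonneg (fun j _ => hμ0 j)
        by_cases hl1 : ℓ ≤ 1
        · -- convex combination of the entry points and the apex : contradiction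
          exfalso
          have hx2 : x = (1 - ℓ) • xb + ∑ j, μ j • (xb + lm j • r j) := by
            have hsum : ∑ j, μ j • (xb + lm j • r j)
                = (∑ j, μ j) • xb + ∑ j, (μ j * lm j) • r j := by
              rw [Finset.sum_smul, ← Finset.sum_add_distrib]
              apply Finset.sum_congr rfl
              intro j _
              rw [smul_add, smul_smul]
            rw [hsum, ← hℓ, ← add_assoc, ← add_smul, sub_add_cancel, one_smul]
            nth_rewrite 1 [hc.2.2]
            congr 1
            apply Finset.sum_congr rfl
            intro j _
            rw [hcμ j]
          have hψeq : ψ x = (1 - ℓ) * ψ xb + ∑ j, μ j * ψ (xb + lm j • r j) := by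
            rw [hx2, map_add, map_smul, map_sum]
            simp_rw [map_smul, smul_eq_mul]
          have hterm : ∀ j ∈ Finset.univ, μ j * β ≤ μ j * ψ (xb + lm j • r j) := by
            intro j _
            by_cases hjs : j ∈ s
            · apply mul_le_mul_of_nonneg_left _ (hμ0 j)
              apply hval
              constructor
              · have hsingle : xb + lm j • r j = xb + lm j • r j := rfl
                have : r j = ∑ i, (if i = j then (1:ℝ) else 0) • r i := single_sum r j
                exact ray_in_PB (fun i => if i = j then 1 else 0)
                  (fun i => by split <;> norm_num) this (lm j)
                  (hray j hjs).2.2.1.le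
              · exact (hray j hjs).2.2.2
            · have : μ j = 0 := by
                rw [hμ]; dsimp only; rw [hc.2.1 j hjs]; simp
              rw [this]; simp
          have hsum_le : (∑ j, μ j) * β ≤ ∑ j, μ j * ψ (xb + lm j • r j) := by
            rw [Finset.sum_mul]
            exact Finset.sum_le_sum hterm
          have hxbψ : β ≤ ψ xb := hval xb ⟨xb_mem_PB, hC0⟩
          have h1 : (1 - ℓ) * β ≤ (1 - ℓ) * ψ xb :=
            mul_le_mul_of_nonneg_left hxbψ (by linarith)
          rw [← hℓ] at hsum_le
          nlinarith
        · -- ℓ > 1 : build the T + K decomposition.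
          push_neg at hl1
          have hℓpos : 0 < ℓ := by linarith
          set θ := (1 + ℓ)/(2 * ℓ) with hθ
          have hθpos : 0 < θ := by positivity
          have hθ1 : θ < 1 := by
            rw [hθ, div_lt_one (by linarith)]
            linarith
          have hθℓ : 1 < θ * ℓ := by
            rw [hθ]
            rw [div_mul_eq_mul_div, lt_div_iff₀ (by linarith : (0:ℝ) < 2 * ℓ)]
            ring_nf
            nlinarith
          set σ := Finset.univ.filter (fun j => 0 < g j (x - xb)) with hσ
          have hσs : ∀ j ∈ σ, j ∈ s := by
            intro j hj
            have := (Finset.mem_filter.mp hj).2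
            by_contra hjs
            rw [hc.2.1 j hjs] at this
            linarith
          have hμσ : ∀ j ∉ σ, μ j = 0 := by
            intro j hj
            have : ¬ 0 < g j (x - xb) := fun h => hj (Finset.mem_filter.mpr ⟨Finset.mem_univ j, h⟩)
            have hcj : g j (x - xb) = 0 := le_antisymm (not_lt.mp this) (hc.1 j)
            rw [hμ]; dsimp only; rw [hcj]; simp
          have hσsum : ∑ j ∈ σ, μ j = ℓ := by
            rw [hℓ]
            exact Finset.sum_subset (Finset.subset_univ σ) (fun j _ hj => hμσ j hj)
          have hσpos : 0 < ∑ j ∈ σ, μ j := by rw [hσsum]; linarith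
          set z := ∑ j, (θ * g j (x - xb)) • r j with hz
          have hcm : σ.centerMass μ (fun j => (θ * ℓ * lm j) • r j) = z := by
            rw [Finset.centerMass, hσsum]
            have hinner : ∑ j ∈ σ, μ j • ((θ * ℓ * lm j) • r j)
                = ℓ • ∑ j ∈ σ, (θ * g j (x - xb)) • r j := by
              rw [Finset.smul_sum]
              apply Finset.sum_congr rfl
              intro j _
              rw [smul_smul, smul_smul]
              congr 1
              rw [hcμ j]
              ring
            rw [hinner, smul_smul, inv_mul_cancel₀ hℓpos.ne', one_smul, hz]
            apply Finset.sum_subset (Finset.subset_univ σ)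
            intro j _ hj
            have : ¬ 0 < g j (x - xb) := fun h => hj (Finset.mem_filter.mpr ⟨Finset.mem_univ j, h⟩)
            have hcj : g j (x - xb) = 0 := le_antisymm (not_lt.mp this) (hc.1 j)
            rw [hcj, mul_zero, zero_smul]
          have hzhull : z ∈ convexHull ℝ (⋃ j ∈ (N1set xb r C ∪ N2set xb r C) ∩ {i | i ∈ s},
              {y : Fin n → ℝ | ∃ l : ℝ, lamM xb (r j) C < (l : EReal)
                ∧ (l : EReal) < lamP xb (r j) C ∧ y = l • r j}) := by
            rw [← hcm]
            apply Finset.centerMass_mem_convexHull σ (fun j _ => hμ0 j) hσpos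
            intro j hjσ
            have hjs := hσs j hjσ
            have hN1 := (hray j hjs).1
            rw [Set.mem_iUnion₂]
            refine ⟨j, ⟨Set.mem_union_left _ hN1, hjs⟩, θ * ℓ * lm j, ?_, ?_, rfl⟩
            · rw [(hray j hjs).2.1]
              have : lm j < θ * ℓ * lm j := by nlinarith [(hray j hjs).2.2.1]
              exact_mod_cast this
            · rw [hN1.2.2]
              exact EReal.coe_lt_top _
          have htpt : xb + z ∈ TS xb r C s := Set.add_mem_add rfl hzhull
          set kv := ∑ j, ((1 - θ) * g j (x - xb)) • r j with hkv
          have hkvK : kv ∈ recc (PS xb r s ∩ C) := by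
            apply hFull
            refine ⟨fun j => (1 - θ) * g j (x - xb),
              fun j => mul_nonneg (by linarith) (hc.1 j),
              fun j hj => by dsimp only; rw [hc.2.1 j hj, mul_zero], rfl⟩
          have hxsplit : x = (xb + z) + kv := by
            nth_rewrite 1 [hc.2.2]
            rw [hz, hkv, add_assoc, ← Finset.sum_add_distrib]
            congr 1
            apply Finset.sum_congr rfl
            intro j _
            rw [← add_smul]
            congr 1
            ring
          rw [hxsplit]
          exact Set.add_mem_add htpt hkvK
      · -- segment argument : contradiction.
        exfalso
        push_neg at hFull
        obtain ⟨u, ⟨e, he0, hes, hu⟩, huK⟩ := hFull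
        have hKcl : IsClosed (recc (PS xb r s ∩ C)) := by
          rw [K_eq_KH hCopen hCconv hg hne]
          exact KH_closed s
        have hkH : k ∈ KH r C g s := (K_eq_KH hCopen hCconv hg hne) ▸ hkK
        obtain ⟨hk1, hk2, hk3, _⟩ := hkH
        set Θ := Set.Icc (0:ℝ) 1 ∩ (fun θ : ℝ => k + θ • (u - k)) ⁻¹'
            (recc (PS xb r s ∩ C)) with hΘ
        have hΘc : IsClosed Θ :=
          IsClosed.inter isClosed_Icc
            (hKcl.preimage (continuous_const.add (continuous_id.smul continuous_const)))
        have hΘne : Θ.Nonempty := ⟨0, ⟨le_rfl, zero_le_one⟩, by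
          simp only [Set.mem_preimage, zero_smul, add_zero]; exact hkK⟩
        have hΘbdd : BddAbove Θ := ⟨1, fun θ hθ => hθ.1.2⟩
        set θs := sSup Θ with hθs
        have hθsΘ : θs ∈ Θ := hΘc.csSup_mem hΘne hΘbdd
        set p := k + θs • (u - k) with hp
        have hpK : p ∈ recc (PS xb r s ∩ C) := hθsΘ.2
        have hθs0 : 0 ≤ θs := hθsΘ.1.1
        have hθs1 : θs ≤ 1 := hθsΘ.1.2
        have hθsne1 : θs ≠ 1 := by
          intro h
          apply huK
          have : p = u := by rw [hp, h, one_smul]; abel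
          rw [← this]; exact hpK
        have hθslt1 : θs < 1 := lt_of_le_of_ne hθs1 hθsne1
        have heu : ∀ j, g j u = e j := by
          intro j; rw [hu, coord_sum hg]
        have hpcoord : ∀ j, g j p = (1 - θs) * g j k + θs * e j := by
          intro j
          rw [hp, map_add, map_smul, map_sub, heu j]
          simp only [smul_eq_mul]
          ring
        have hp0 : p ≠ 0 := by
          intro h
          apply hk0
          have hgz : ∀ j, g j k = 0 := by
            intro j
            have h0 : (1 - θs) * g j k + θs * e j = 0 := by
              rw [← hpcoord j, h, map_zero]
            have h1 : (1 - θs) * g j k = 0 := by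
              nlinarith [mul_nonneg hθs0 (he0 j),
                mul_nonneg (by linarith : (0:ℝ) ≤ 1 - θs) (hk1 j)]
            rcases mul_eq_zero.mp h1 with h2 | h2
            · linarith
            · exact h2
          rw [hk3]
          exact Finset.sum_eq_zero fun j _ => by rw [hgz j, zero_smul]
        set w : ℕ → Fin n → ℝ := fun m => p + ((1 - θs)/((m:ℝ)+2)) • (u - k) with hw
        have hψwm : ∀ m : ℕ, 0 ≤ ψ (w m) := by
          intro m
          have hm2 : (0:ℝ) < (m:ℝ) + 2 := by positivity
          have hδpos : 0 < (1 - θs)/((m:ℝ)+2) := div_pos (by linarith) hm2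
          have hδle : (1 - θs)/((m:ℝ)+2) ≤ 1 - θs :=
            div_le_self (by linarith) (by linarith)
          set θm := θs + (1 - θs)/((m:ℝ)+2) with hθm
          have hθm1 : θm ≤ 1 := by rw [hθm]; linarith
          have hθm0 : 0 ≤ θm := by rw [hθm]; linarith
          have hwm_eq : w m = k + θm • (u - k) := by
            rw [hw]
            dsimp only
            rw [hp, hθm, add_smul]
            abel
          have hwmK : w m ∉ recc (PS xb r s ∩ C) := by
            intro hmem
            have hmemΘ : θm ∈ Θ := by
              refine ⟨⟨hθm0, hθm1⟩, ?_⟩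
              simp only [Set.mem_preimage]
              rw [← hwm_eq]
              exact hmem
            have := le_csSup hΘbdd hmemΘ
            rw [← hθs] at this
            rw [hθm] at this
            linarith
          set ewm : ι → ℝ := fun j => (1 - θm) * g j k + θm * e j with hewm
          have hewm0 : ∀ j, 0 ≤ ewm j := fun j =>
            add_nonneg (mul_nonneg (by linarith) (hk1 j)) (mul_nonneg hθm0 (he0 j))
          have hewms : ∀ j, j ∉ s → ewm j = 0 := by
            intro j hj
            rw [hewm]
            dsimp only
            rw [hk2 j hj, hes j hj]
            ring
          have hwm_sum : w m = ∑ j, ewm j • r j := by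
            rw [hwm_eq]
            have hsplit : k + θm • (u - k) = (1 - θm) • k + θm • u := by
              rw [smul_sub, sub_smul, one_smul]
              abel
            rw [hsplit]
            nth_rewrite 1 [hk3]
            rw [hu, Finset.smul_sum, Finset.smul_sum, ← Finset.sum_add_distrib]
            apply Finset.sum_congr rfl
            intro j _
            rw [smul_smul, smul_smul, ← add_smul]
          obtain ⟨T, hT⟩ := tail_miss hCopen hCconv ewm hewm0 hewms hwm_sum hwmK
          exact psi_tail_nonneg ψ hval ewm hewm0 hwm_sum hT
        have hlim : Filter.Tendsto w Filter.atTop (nhds p) := by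
          have h2 : Filter.Tendsto (fun m : ℕ => ((m:ℝ)+2)) Filter.atTop Filter.atTop :=
            Filter.tendsto_atTop_add_const_right Filter.atTop 2 tendsto_natCast_atTop_atTop
          have h0 : Filter.Tendsto (fun m : ℕ => (1 - θs)/((m:ℝ)+2))
              Filter.atTop (nhds 0) := Filter.Tendsto.const_div_atTop h2 (1 - θs)
          have hfin := (h0.smul_const (u - k)).const_add p
          rw [hw]
          simpa using hfin
        have hψp : 0 ≤ ψ p := by
          have hcomp : Filter.Tendsto (fun m : ℕ => ψ (w m)) Filter.atTop (nhds (ψ p)) :=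
            (ψ.continuous.tendsto p).comp hlim
          exact ge_of_tendsto hcomp (Filter.Eventually.of_forall hψwm)
        exact absurd (hKneg p hpK hp0) (not_lt.mpr hψp)

end Main

end Stmt3Aux


/-- Corollary 1. With `T^{P^B∩C} := T + recc(P^B ∩ C)` (the interval
parameters `λ⁻, λ⁺` defining `T` are taken with respect to the original `C`),
`cl conv(P^B ∖ C) = cl conv(P^B ∖ T^{P^B∩C})`. -/
theorem stmt3 (xb : Fin n → ℝ) (r : ι → Fin n → ℝ) (hr : LinearIndependent ℝ r)
    (C : Set (Fin n → ℝ)) (hCopen : IsOpen C) (hCconv : Convex ℝ C)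
    (hxb : xb ∉ closure C) :
    closure (convexHull ℝ (PBset xb r \ C))
      = closure (convexHull ℝ (PBset xb r \ (Tset xb r C + recc (PBset xb r ∩ C)))) := by
  obtain ⟨g, hg⟩ := Stmt3Aux.exists_g hr
  apply Set.Subset.antisymm
  · apply closure_mono
    apply convexHull_mono
    intro y hy
    exact ⟨hy.1, fun hyA => hy.2 (Stmt3Aux.A_sub_C hCconv hyA)⟩
  · refine closure_minimal (convexHull_min ?_ ((convex_convexHull ℝ _).closure))
      isClosed_closure
    intro x hx
    obtain ⟨hxP, hxA⟩ := hx
    by_cases hxC : x ∈ C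
    · by_contra hX
      obtain ⟨f, u, hfx, hfX⟩ := geometric_hahn_banach_point_closed
        ((convex_convexHull ℝ _).closure) isClosed_closure hX
      have hval : ∀ y ∈ PBset xb r \ C, u ≤ f y := fun y hy =>
        (hfX y (subset_closure (subset_convexHull ℝ _ hy))).le
      have hxPS : x ∈ Stmt3Aux.PS xb r (Finset.univ : Finset ι) := by
        rw [Stmt3Aux.PS_univ]; exact hxP
      have hmem := Stmt3Aux.DML hr hg hCopen hCconv hxb f u hval Finset.univ x hxPS hxC hfx
      rw [Stmt3Aux.TS_univ, Stmt3Aux.PS_univ] at hmem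
      exact hxA hmem
    · exact subset_closure (subset_convexHull ℝ _ ⟨hxP, hxC⟩)
end
end

section
/- Let S ⊆ M. Then every point x = x̄ + Σ_{j∈N} x_j r^j of P^B ∖ G_D^C (with all x_j ≥ 0) satisfies Σ_{j∈S} x_j/λ⁻_j − Σ_{j∈N∖D} x_j/ε_j(S) ≤ 1 (using the convention x/(+∞) := 0). -/
open Set Pointwise

noncomputable section

variable {n : ℕ} {ι : Type*} [Fintype ι]

/-- `G_D = {x̄} + conv(⋃_{j∈D} {λ r^j : λ > λ⁻_j})`. -/
def GDset (xb : Fin n → ℝ) (r : ι → Fin n → ℝ) (C : Set (Fin n → ℝ)) (D : Finset ι) :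
    Set (Fin n → ℝ) :=
  {xb} + convexHull ℝ (⋃ j ∈ (D : Set ι),
    {y : Fin n → ℝ | ∃ l : ℝ, lamM xb (r j) C < (l : EReal) ∧ y = l • r j})

/-- `G_D^C = G_D + recc(C)`. -/
def GDCset (xb : Fin n → ℝ) (r : ι → Fin n → ℝ) (C : Set (Fin n → ℝ)) (D : Finset ι) :
    Set (Fin n → ℝ) :=
  GDset xb r C D + recc C

/-- `γ_{ij} = sup {γ ≥ 0 : λ⁻_i r^i + γ r^j ∈ recc(G_D^C)}` (`+∞` if unbounded,
`−∞ = sSup ∅` if the set is empty). -/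
noncomputable def gam (xb : Fin n → ℝ) (r : ι → Fin n → ℝ) (C : Set (Fin n → ℝ))
    (D : Finset ι) (i j : ι) : EReal :=
  sSup ((fun g : ℝ => (g : EReal)) ''
    {g : ℝ | 0 ≤ g ∧ (lamM xb (r i) C).toReal • r i + g • r j ∈ recc (GDCset xb r C D)})

/-- `M = {i ∈ D : γ_{ij} > 0 for all j ∈ N∖D}`. -/
def Mset (xb : Fin n → ℝ) (r : ι → Fin n → ℝ) (C : Set (Fin n → ℝ)) (D : Finset ι) :
    Set ι :=
  {i | i ∈ D ∧ ∀ j, j ∉ D → 0 < gam xb r C D i j}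

/-- `ε_j(S) = min_{i∈S} γ_{ij}` for `S ≠ ∅`, and `+∞` for `S = ∅` (via `sInf ∅ = ⊤`). -/
noncomputable def eps (xb : Fin n → ℝ) (r : ι → Fin n → ℝ) (C : Set (Fin n → ℝ))
    (D : Finset ι) (S : Finset ι) (j : ι) : EReal :=
  sInf ((fun i => gam xb r C D i j) '' (S : Set ι))


section AuxLemmas

variable {n : ℕ} {ι : Type*} [Fintype ι]

lemma recc_zero (A : Set (Fin n → ℝ)) : (0 : Fin n → ℝ) ∈ recc A := by
  intro a ha t ht; simpa using ha

lemma recc_add {A : Set (Fin n → ℝ)} {d₁ d₂ : Fin n → ℝ}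
    (h₁ : d₁ ∈ recc A) (h₂ : d₂ ∈ recc A) : d₁ + d₂ ∈ recc A := by
  intro a ha t ht
  have h := h₂ (a + t • d₁) (h₁ a ha t ht) t ht
  have he : a + t • (d₁ + d₂) = a + t • d₁ + t • d₂ := by
    rw [smul_add]; abel
  rwa [he]

lemma recc_smul {A : Set (Fin n → ℝ)} {d : Fin n → ℝ} (h : d ∈ recc A)
    {s : ℝ} (hs : 0 ≤ s) : s • d ∈ recc A := by
  intro a ha t ht
  have := h a ha (t * s) (mul_nonneg ht hs)
  rwa [smul_smul]

lemma recc_sum {A : Set (Fin n → ℝ)} {κ : Type*} (s : Finset κ) (f : κ → Fin n → ℝ)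
    (h : ∀ j ∈ s, f j ∈ recc A) : ∑ j ∈ s, f j ∈ recc A :=
  Finset.sum_induction f (· ∈ recc A) (fun _ _ => recc_add) (recc_zero A) h

lemma ereal_aux {x : EReal} (h1 : 0 < x) (h2 : x < ⊤) :
    0 < x.toReal ∧ (x.toReal : EReal) = x := by
  have hb : x ≠ ⊥ := ne_bot_of_gt h1
  have hc := EReal.coe_toReal h2.ne hb
  refine ⟨EReal.coe_pos.mp ?_, hc⟩
  rw [hc]; exact h1

lemma Kmem (xb : Fin n → ℝ) (r : ι → Fin n → ℝ) (C : Set (Fin n → ℝ)) (D : Finset ι)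
    (hlam : ∀ j ∈ D, 0 < lamM xb (r j) C ∧ lamM xb (r j) C < ⊤)
    (t : ι → ℝ) (ht : ∀ j ∈ D, 0 ≤ t j)
    (hsum : 1 < ∑ j ∈ D, t j / (lamM xb (r j) C).toReal) :
    ∑ j ∈ D, t j • r j ∈ convexHull ℝ (⋃ j ∈ (D : Set ι),
      {y : Fin n → ℝ | ∃ l : ℝ, lamM xb (r j) C < (l : EReal) ∧ y = l • r j}) := by
  have hΛ : ∀ j ∈ D, 0 < (lamM xb (r j) C).toReal ∧
      ((lamM xb (r j) C).toReal : EReal) = lamM xb (r j) C :=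
    fun j hj => ereal_aux (hlam j hj).1 (hlam j hj).2
  set Λ : ι → ℝ := fun j => (lamM xb (r j) C).toReal with hΛdef
  set σ : ℝ := ∑ j ∈ D, t j / Λ j with hσdef
  have hσ : 1 < σ := hsum
  have hσ0 : 0 < σ := lt_trans one_pos hσ
  have key : ∑ j ∈ D, t j • r j = ∑ j ∈ D, ((t j / Λ j) / σ) • ((σ * Λ j) • r j) := by
    refine Finset.sum_congr rfl fun j hj => ?_
    rw [smul_smul]
    congr 1
    have hΛj := (hΛ j hj).1
    field_simp
    exact (mul_inv_cancel_right₀ hΛj.ne' (t j)).symm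
  rw [key]
  refine Convex.sum_mem (convex_convexHull ℝ _) (fun j hj => ?_) ?_ (fun j hj => ?_)
  · exact div_nonneg (div_nonneg (ht j hj) (hΛ j hj).1.le) hσ0.le
  · rw [← Finset.sum_div, ← hσdef]
    exact div_self hσ0.ne'
  · apply subset_convexHull
    refine Set.mem_iUnion₂.mpr ⟨j, hj, ⟨σ * Λ j, ?_, rfl⟩⟩
    rw [← (hΛ j hj).2]
    exact_mod_cast (lt_mul_iff_one_lt_left (hΛ j hj).1).mpr hσ

lemma Kray (xb : Fin n → ℝ) (r : ι → Fin n → ℝ) (C : Set (Fin n → ℝ)) (D : Finset ι)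
    [DecidableEq ι]
    (hlam : ∀ j ∈ D, 0 < lamM xb (r j) C ∧ lamM xb (r j) C < ⊤)
    {p : Fin n → ℝ}
    (hp : p ∈ convexHull ℝ (⋃ j ∈ (D : Set ι),
      {y : Fin n → ℝ | ∃ l : ℝ, lamM xb (r j) C < (l : EReal) ∧ y = l • r j}))
    {i : ι} (hi : i ∈ D) {s : ℝ} (hs : 0 ≤ s) :
    p + s • r i ∈ convexHull ℝ (⋃ j ∈ (D : Set ι),
      {y : Fin n → ℝ | ∃ l : ℝ, lamM xb (r j) C < (l : EReal) ∧ y = l • r j}) := by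
  have hΛ : ∀ j ∈ D, 0 < (lamM xb (r j) C).toReal ∧
      ((lamM xb (r j) C).toReal : EReal) = lamM xb (r j) C :=
    fun j hj => ereal_aux (hlam j hj).1 (hlam j hj).2
  set K := convexHull ℝ (⋃ j ∈ (D : Set ι),
      {y : Fin n → ℝ | ∃ l : ℝ, lamM xb (r j) C < (l : EReal) ∧ y = l • r j}) with hK
  set Λ : ι → ℝ := fun j => (lamM xb (r j) C).toReal with hΛdef
  suffices hsub : K ⊆ {p | ∀ s : ℝ, 0 ≤ s → p + s • r i ∈ K} from hsub hp s hs
  rw [hK]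
  apply convexHull_min
  · rintro u hu s' hs'
    obtain ⟨j, hj, l, hl, rfl⟩ := Set.mem_iUnion₂.mp hu
    have hjD : j ∈ D := hj
    have hlpos : 0 < l := by
      have := (hΛ j hjD).2 ▸ hl
      have hlt : Λ j < l := EReal.coe_lt_coe_iff.mp this
      linarith [(hΛ j hjD).1]
    set t : ι → ℝ := fun j'' => (if j'' = j then l else 0) + (if j'' = i then s' else 0)
      with htdef
    have h1 : ∑ j'' ∈ D, t j'' / Λ j'' =
        l / Λ j + s' / Λ i := by
      have : ∀ j'' ∈ D, t j'' / Λ j''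
          = (if j'' = j then l / Λ j'' else 0) + (if j'' = i then s' / Λ j'' else 0) := by
        intro j'' _
        rw [htdef]
        simp only [add_div]
        congr 1 <;> split_ifs <;> simp
      rw [Finset.sum_congr rfl this, Finset.sum_add_distrib,
        Finset.sum_ite_eq' D j (fun j'' => l / Λ j''),
        Finset.sum_ite_eq' D i (fun j'' => s' / Λ j''), if_pos hjD, if_pos hi]
    have h2 : ∑ j'' ∈ D, t j'' • r j'' = l • r j + s' • r i := by
      have : ∀ j'' ∈ D, t j'' • r j''
          = (if j'' = j then l • r j'' else 0) + (if j'' = i then s' • r j'' else 0) := by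
        intro j'' _
        rw [htdef, add_smul]
        congr 1 <;> split_ifs <;> simp
      rw [Finset.sum_congr rfl this, Finset.sum_add_distrib,
        Finset.sum_ite_eq' D j (fun j'' => l • r j''),
        Finset.sum_ite_eq' D i (fun j'' => s' • r j''), if_pos hjD, if_pos hi]
    have hmem := Kmem xb r C D hlam t (fun j'' _ => by
      rw [htdef]
      have : (0:ℝ) ≤ if j'' = j then l else 0 := by split_ifs <;> [exact hlpos.le; rfl]
      have h2' : (0:ℝ) ≤ if j'' = i then s' else 0 := by split_ifs <;> [exact hs'; rfl]
      positivity) ?_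
    · rw [h2] at hmem
      exact hmem
    · rw [h1]
      have hgt : 1 < l / Λ j := by
        rw [lt_div_iff₀ (hΛ j hjD).1]
        have := EReal.coe_lt_coe_iff.mp ((hΛ j hjD).2 ▸ hl)
        linarith
      have : 0 ≤ s' / Λ i := div_nonneg hs' (hΛ i hi).1.le
      linarith
  · intro x hx y hy a b ha hb hab s' hs'
    have he : a • (x + s' • r i) + b • (y + s' • r i)
        = a • x + b • y + (a + b) • (s' • r i) := by
      rw [smul_add, smul_add, add_smul]; abel
    have he2 : a • x + b • y + s' • r i = a • (x + s' • r i) + b • (y + s' • r i) := by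
      rw [he, hab, one_smul]
    rw [he2]
    exact convex_convexHull ℝ _ (hx s' hs') (hy s' hs') ha hb hab

lemma lam_smul_recc (xb : Fin n → ℝ) (r : ι → Fin n → ℝ) (C : Set (Fin n → ℝ))
    (D : Finset ι) [DecidableEq ι]
    (hlam : ∀ j ∈ D, 0 < lamM xb (r j) C ∧ lamM xb (r j) C < ⊤)
    {i : ι} (hi : i ∈ D) :
    (lamM xb (r i) C).toReal • r i ∈ recc (GDCset xb r C D) := by
  intro a ha t ht
  obtain ⟨p, hp, q, hq, rfl⟩ := Set.mem_add.mp ha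
  obtain ⟨x0, hx0, k, hk, rfl⟩ := Set.mem_add.mp hp
  have hx0' : x0 = xb := hx0
  have hΛi := (ereal_aux (hlam i hi).1 (hlam i hi).2).1
  have hk' := Kray xb r C D hlam hk hi (mul_nonneg ht hΛi.le)
  have heq : x0 + k + q + t • ((lamM xb (r i) C).toReal • r i)
      = (x0 + (k + (t * (lamM xb (r i) C).toReal) • r i)) + q := by
    rw [smul_smul]; abel
  rw [heq]
  exact Set.add_mem_add (Set.add_mem_add hx0 hk') hq

lemma ray_recc (xb : Fin n → ℝ) (r : ι → Fin n → ℝ) (C : Set (Fin n → ℝ))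
    (D : Finset ι) [DecidableEq ι]
    (hlam : ∀ j ∈ D, 0 < lamM xb (r j) C ∧ lamM xb (r j) C < ⊤)
    {i j : ι} (hi : i ∈ D) {g : ℝ} (hg : 0 ≤ g)
    (hlt : (g : EReal) < gam xb r C D i j) :
    (lamM xb (r i) C).toReal • r i + g • r j ∈ recc (GDCset xb r C D) := by
  rw [gam, lt_sSup_iff] at hlt
  obtain ⟨_, ⟨g', ⟨hg'0, hg'mem⟩, rfl⟩, hgg'⟩ := hlt
  have hgg : g < g' := EReal.coe_lt_coe_iff.mp hgg'
  have hg'pos : 0 < g' := lt_of_le_of_lt hg hgg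
  set θ : ℝ := g / g' with hθdef
  have hθ0 : 0 ≤ θ := div_nonneg hg hg'pos.le
  have hθ1 : θ ≤ 1 := (div_le_one hg'pos).mpr hgg.le
  have hθg : θ * g' = g := div_mul_cancel₀ g hg'pos.ne'
  have h1 := lam_smul_recc xb r C D hlam hi
  have expr : (lamM xb (r i) C).toReal • r i + g • r j
      = (1 - θ) • ((lamM xb (r i) C).toReal • r i)
        + θ • ((lamM xb (r i) C).toReal • r i + g' • r j) := by
    rw [smul_add, ← add_assoc, ← add_smul,
      show (1 - θ) + θ = (1:ℝ) by ring, one_smul, smul_smul, hθg]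
  rw [expr]
  exact recc_add (recc_smul h1 (by linarith)) (recc_smul hg'mem hθ0)

end AuxLemmas

/-- Theorem 3. For `S ⊆ M`, every point `x = x̄ + Σ_j x_j r^j` of
`P^B ∖ G_D^C` satisfies `Σ_{j∈S} x_j/λ⁻_j − Σ_{j∈N∖D} x_j/ε_j(S) ≤ 1`
(convention `x/(+∞) := 0`, realized via `EReal.toReal ⊤ = 0` and `x/0 = 0`). -/
theorem stmt6 [DecidableEq ι] (xb : Fin n → ℝ) (r : ι → Fin n → ℝ)
    (hr : LinearIndependent ℝ r)
    (C : Set (Fin n → ℝ)) (hCopen : IsOpen C) (hCconv : Convex ℝ C)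
    (hxb : xb ∉ closure C) (hrecc : recc C ⊆ reccPBset r)
    (D : Finset ι) (hD : (D : Set ι) ⊆ N1set xb r C ∪ N2set xb r C)
    (S : Finset ι) (hS : (S : Set ι) ⊆ Mset xb r C D)
    (c : ι → ℝ) (hc : ∀ j, 0 ≤ c j)
    (hx : xb + ∑ j, c j • r j ∉ GDCset xb r C D) :
    ∑ j ∈ S, c j / (lamM xb (r j) C).toReal
      - ∑ j ∈ Dᶜ, c j / (eps xb r C D S j).toReal ≤ 1 := by
  classical
  rcases S.eq_empty_or_nonempty with hSe | hSne
  · subst hSe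
    have he : ∀ j, eps xb r C D (∅ : Finset ι) j = ⊤ := by
      intro j; simp [eps]
    simp [he]
  by_contra hcon
  push_neg at hcon
  -- basic facts
  have hSD : ∀ i ∈ S, i ∈ D := fun i hi => (hS hi).1
  have hlam : ∀ j ∈ D, 0 < lamM xb (r j) C ∧ lamM xb (r j) C < ⊤ := by
    intro j hj
    rcases hD (Finset.mem_coe.mpr hj) with h | h
    · exact ⟨h.1, h.2.1⟩
    · exact ⟨h.1, h.2.1⟩
  have hΛ : ∀ j ∈ D, 0 < (lamM xb (r j) C).toReal ∧
      ((lamM xb (r j) C).toReal : EReal) = lamM xb (r j) C :=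
    fun j hj => ereal_aux (hlam j hj).1 (hlam j hj).2
  set Λ : ι → ℝ := fun j => (lamM xb (r j) C).toReal with hΛdef
  -- eps facts
  have hepsmem : ∀ j : ι, ∃ i1 ∈ S, gam xb r C D i1 j = eps xb r C D S j := by
    intro j
    have hne : ((fun i => gam xb r C D i j) '' (S : Set ι)).Nonempty :=
      Set.Nonempty.image _ (Finset.coe_nonempty.mpr hSne)
    have hfin : ((fun i => gam xb r C D i j) '' (S : Set ι)).Finite :=
      Set.Finite.image _ (S.finite_toSet)
    obtain ⟨i1, hi1, heq⟩ := Set.Nonempty.csInf_mem hne hfin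
    exact ⟨i1, hi1, heq⟩
  have hepspos : ∀ j, j ∉ D → 0 < eps xb r C D S j := by
    intro j hj
    obtain ⟨i1, hi1, heq⟩ := hepsmem j
    rw [← heq]
    exact (hS hi1).2 j hj
  have hepsnn : ∀ j, 0 ≤ (eps xb r C D S j).toReal := by
    intro j
    by_cases h : eps xb r C D S j = ⊤
    · rw [h]; simp
    · by_cases h' : eps xb r C D S j = ⊥
      · rw [h']; simp
      · obtain ⟨i1, hi1, heq⟩ := hepsmem j
        have hg0 : (0:EReal) ≤ gam xb r C D i1 j := by
          rw [gam]
          refine le_sSup ?_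
          exact ⟨0, ⟨le_refl 0, by simpa using lam_smul_recc xb r C D hlam (hSD i1 hi1)⟩,
            by norm_num⟩
        have : (0:EReal) ≤ eps xb r C D S j := heq ▸ hg0
        have hc2 := EReal.coe_toReal h h'
        rw [← hc2] at this
        exact_mod_cast this
  set E : ℝ := ∑ j ∈ Dᶜ, c j / (eps xb r C D S j).toReal with hEdef
  set T : ℝ := ∑ j ∈ S, c j / Λ j with hTdef
  have hE0 : 0 ≤ E := Finset.sum_nonneg fun j _ => div_nonneg (hc j) (hepsnn j)
  have hTE : 1 + E < T := by
    have : 1 < T - E := hcon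
    linarith
  have hT1 : 1 < T := by linarith
  have hT0 : 0 < T := by linarith
  set m : ℝ := (Dᶜ.card : ℝ) with hmdef
  have hm0 : 0 ≤ m := Nat.cast_nonneg _
  set δ : ℝ := (T - 1 - E) / (m + 1) with hδdef
  have hδ : 0 < δ := div_pos (by linarith) (by linarith)
  have hδm : (m + 1) * δ = T - 1 - E := by
    rw [hδdef, mul_div_cancel₀ _ (by linarith : m + (1:ℝ) ≠ 0)]
  -- choice of g
  have hgex : ∀ j : ι, ∃ gj : ℝ, 0 < gj ∧ (j ∉ D →
      ((gj : EReal) < eps xb r C D S j ∧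
        c j / gj ≤ c j / (eps xb r C D S j).toReal + δ)) := by
    intro j
    by_cases hjD : j ∈ D
    · exact ⟨1, one_pos, fun h => absurd hjD h⟩
    · have hpos := hepspos j hjD
      by_cases htop : eps xb r C D S j = ⊤
      · have hden : 0 < c j / δ + 1 :=
          add_pos_of_nonneg_of_pos (div_nonneg (hc j) hδ.le) one_pos
        refine ⟨c j / δ + 1, hden, fun _ => ⟨?_, ?_⟩⟩
        · rw [htop]; exact EReal.coe_lt_top _
        · rw [htop]
          simp only [EReal.toReal_top, div_zero, zero_add]
          rw [div_le_iff₀ hden]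
          have hexp : δ * (c j / δ + 1) = c j + δ := by
            field_simp
          linarith [mul_comm (c j / δ + 1) δ, hexp]
      · have hbot : eps xb r C D S j ≠ ⊥ := ne_bot_of_gt hpos
        have hcoe : ((eps xb r C D S j).toReal : EReal) = eps xb r C D S j :=
          EReal.coe_toReal htop hbot
        have hεpos : 0 < (eps xb r C D S j).toReal := by
          apply EReal.coe_pos.mp
          rw [hcoe]; exact hpos
        set ε : ℝ := (eps xb r C D S j).toReal with hεdef
        by_cases hcj : c j = 0
        · refine ⟨ε / 2, by positivity, fun _ => ⟨?_, ?_⟩⟩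
          · rw [← hcoe]
            exact_mod_cast (by linarith : ε / 2 < ε)
          · rw [hcj]
            simp only [zero_div]
            positivity
        · have hc0 : 0 < c j := lt_of_le_of_ne (hc j) (Ne.symm hcj)
          refine ⟨c j * ε / (c j + δ * ε), by positivity, fun _ => ⟨?_, ?_⟩⟩
          · rw [← hcoe]
            apply EReal.coe_lt_coe_iff.mpr
            rw [div_lt_iff₀ (by positivity)]
            nlinarith [mul_pos hδ (mul_pos hεpos hεpos)]
          · have heq2 : c j / (c j * ε / (c j + δ * ε)) = c j / ε + δ := by
              field_simp
            rw [heq2]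
  choose g hgpos hgspec using hgex
  set A : ℝ := ∑ j ∈ Dᶜ, c j / g j with hAdef
  have hA0 : 0 ≤ A :=
    Finset.sum_nonneg fun j _ => div_nonneg (hc j) (hgpos j).le
  have hAbound : A ≤ E + m * δ := by
    rw [hAdef, hEdef]
    have : ∑ j ∈ Dᶜ, c j / g j
        ≤ ∑ j ∈ Dᶜ, (c j / (eps xb r C D S j).toReal + δ) := by
      refine Finset.sum_le_sum fun j hj => ?_
      exact (hgspec j (Finset.mem_compl.mp hj)).2
    rw [Finset.sum_add_distrib, Finset.sum_const, nsmul_eq_mul] at this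
    exact this
  have hAT1 : A < T - 1 := by
    have : E + m * δ < T - 1 := by nlinarith
    linarith
  have hAT : A ≤ T := by linarith
  have h1AT : 0 ≤ 1 - A / T := by
    rw [sub_nonneg, div_le_one hT0]; exact hAT
  -- weights
  set w : ι → ℝ := fun i => (c i / Λ i) / T with hwdef
  have hw0 : ∀ i ∈ S, 0 ≤ w i := fun i hi =>
    div_nonneg (div_nonneg (hc i) (hΛ i (hSD i hi)).1.le) hT0.le
  have hwsum : ∑ i ∈ S, w i = 1 := by
    rw [hwdef]
    rw [← Finset.sum_div, ← hTdef]
    exact div_self hT0.ne'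
  -- the recession element
  set ρ : Fin n → ℝ :=
    ∑ j ∈ Dᶜ, ∑ i ∈ S, ((c j / g j) * w i) • (Λ i • r i + g j • r j) with hρdef
  have hρ : ρ ∈ recc (GDCset xb r C D) := by
    refine recc_sum _ _ fun j hj => recc_sum _ _ fun i hi => ?_
    refine recc_smul ?_ (mul_nonneg (div_nonneg (hc j) (hgpos j).le) (hw0 i hi))
    refine ray_recc xb r C D hlam (hSD i hi) (hgpos j).le ?_
    have h1 := (hgspec j (Finset.mem_compl.mp hj)).1
    refine lt_of_lt_of_le h1 ?_
    rw [eps]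
    exact sInf_le ⟨i, Finset.mem_coe.mpr hi, rfl⟩
  -- the convex-hull element
  set t : ι → ℝ := fun j => if j ∈ S then c j * (1 - A / T) else c j with htdef
  have ht0 : ∀ j ∈ D, 0 ≤ t j := by
    intro j _
    simp only [htdef]
    split_ifs
    · exact mul_nonneg (hc j) h1AT
    · exact hc j
  have htsum : 1 < ∑ j ∈ D, t j / Λ j := by
    have hsplit : ∑ j ∈ D \ S, t j / Λ j + ∑ j ∈ S, t j / Λ j = ∑ j ∈ D, t j / Λ j :=
      Finset.sum_sdiff (fun i hi => hSD i hi)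
    have hS' : ∑ j ∈ S, t j / Λ j = T - A := by
      have : ∀ j ∈ S, t j / Λ j = (1 - A / T) * (c j / Λ j) := by
        intro j hj
        simp only [htdef, if_pos hj]
        ring
      rw [Finset.sum_congr rfl this, ← Finset.mul_sum, ← hTdef]
      field_simp
    have hDS : 0 ≤ ∑ j ∈ D \ S, t j / Λ j := by
      refine Finset.sum_nonneg fun j hj => ?_
      have hjD : j ∈ D := (Finset.mem_sdiff.mp hj).1
      exact div_nonneg (ht0 j hjD) (hΛ j hjD).1.le
    rw [← hsplit, hS']
    linarith
  have hk := Kmem xb r C D hlam t ht0 htsum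
  -- rewrite ρ
  have hrw : ∀ j ∈ Dᶜ, ∑ i ∈ S, ((c j / g j) * w i) • (Λ i • r i + g j • r j)
      = ∑ i ∈ S, ((c j / g j) * w i * Λ i) • r i + c j • r j := by
    intro j _
    simp only [smul_add, smul_smul]
    rw [Finset.sum_add_distrib]
    congr 1
    rw [← Finset.sum_smul]
    congr 1
    have : ∀ i ∈ S, c j / g j * w i * g j = (c j / g j * g j) * w i := by
      intro i _; ring
    rw [Finset.sum_congr rfl this, ← Finset.mul_sum, hwsum, mul_one,
      div_mul_cancel₀ _ (hgpos j).ne']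
  have hρeq : ρ = ∑ i ∈ S, (A * w i * Λ i) • r i + ∑ j ∈ Dᶜ, c j • r j := by
    rw [hρdef, Finset.sum_congr rfl hrw, Finset.sum_add_distrib]
    congr 1
    rw [Finset.sum_comm]
    refine Finset.sum_congr rfl fun i _ => ?_
    rw [← Finset.sum_smul]
    congr 1
    have : ∀ j ∈ Dᶜ, c j / g j * w i * Λ i = (c j / g j) * (w i * Λ i) := by
      intro j _; ring
    rw [Finset.sum_congr rfl this, ← Finset.sum_mul, ← hAdef]
    ring
  -- main identity
  have hmain : ∑ j, c j • r j = (∑ j ∈ D, t j • r j) + ρ := by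
    rw [hρeq]
    have h1 : ∑ i ∈ S, (A * w i * Λ i) • r i
        = ∑ j ∈ D, (if j ∈ S then A * w j * Λ j else 0) • r j := by
      rw [← Finset.sum_subset (fun i hi => hSD i hi)
        (fun j _ hj => by rw [if_neg hj, zero_smul])]
      exact Finset.sum_congr rfl fun i hi => by rw [if_pos hi]
    rw [h1]
    have h2 : ∑ j ∈ D, t j • r j + ∑ j ∈ D, (if j ∈ S then A * w j * Λ j else 0) • r j
        = ∑ j ∈ D, c j • r j := by
      rw [← Finset.sum_add_distrib]
      refine Finset.sum_congr rfl fun j hj => ?_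
      rw [← add_smul]
      congr 1
      by_cases hjS : j ∈ S
      · simp only [htdef, hwdef, if_pos hjS]
        have hΛj : Λ j ≠ 0 := (hΛ j hj).1.ne'
        field_simp
        ring
      · simp only [htdef, if_neg hjS, add_zero]
    rw [← add_assoc, h2, Finset.sum_add_sum_compl]
  -- conclude
  have hbase : xb + ∑ j ∈ D, t j • r j ∈ GDCset xb r C D := by
    have h1 : xb + ∑ j ∈ D, t j • r j ∈ GDset xb r C D :=
      Set.add_mem_add (Set.mem_singleton xb) hk
    have h2 : xb + ∑ j ∈ D, t j • r j
        = (xb + ∑ j ∈ D, t j • r j) + 0 := (add_zero _).symm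
    rw [GDCset, h2]
    exact Set.add_mem_add h1 (recc_zero C)
  have hfin := hρ _ hbase 1 zero_le_one
  rw [one_smul] at hfin
  refine hx ?_
  rw [hmain, ← add_assoc]
  exact hfin
end
end

section
/- Let x̂ ∈ ℝ^N with x̂_j ≥ 0 for all j ∈ N. Then the set function F : 2^M → ℝ defined by F(S) := Σ_{j∈S} x̂_j/λ⁻_j − Σ_{j∈N∖D} x̂_j/ε_j(S) (with x̂_j/(+∞) := 0) is supermodular, i.e., F(S ∪ T) + F(S ∩ T) ≥ F(S) + F(T) for all S, T ⊆ M. -/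
open Set Pointwise

noncomputable section

variable {n : ℕ} {ι : Type*} [Fintype ι]

/-- The cut-violation set function
`F(S) = Σ_{j∈S} x̂_j/λ⁻_j − Σ_{j∈N∖D} x̂_j/ε_j(S)`. -/
noncomputable def Ffun [DecidableEq ι] (xb : Fin n → ℝ) (r : ι → Fin n → ℝ)
    (C : Set (Fin n → ℝ)) (D : Finset ι) (xhat : ι → ℝ) (S : Finset ι) : ℝ :=
  ∑ j ∈ S, xhat j / (lamM xb (r j) C).toReal
    - ∑ j ∈ Dᶜ, xhat j / (eps xb r C D S j).toReal

/-- Proposition 4. For nonnegative `x̂`, the set function `F` is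
supermodular on subsets of `M`: `F(S ∪ T) + F(S ∩ T) ≥ F(S) + F(T)`. -/
theorem stmt7 [DecidableEq ι] (xb : Fin n → ℝ) (r : ι → Fin n → ℝ)
    (hr : LinearIndependent ℝ r)
    (C : Set (Fin n → ℝ)) (hCopen : IsOpen C) (hCconv : Convex ℝ C)
    (hxb : xb ∉ closure C) (hrecc : recc C ⊆ reccPBset r)
    (D : Finset ι) (hD : (D : Set ι) ⊆ N1set xb r C ∪ N2set xb r C)
    (xhat : ι → ℝ) (hxhat : ∀ j, 0 ≤ xhat j)
    (S T : Finset ι) (hS : (S : Set ι) ⊆ Mset xb r C D) (hT : (T : Set ι) ⊆ Mset xb r C D) :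
    Ffun xb r C D xhat S + Ffun xb r C D xhat T ≤
      Ffun xb r C D xhat (S ∪ T) + Ffun xb r C D xhat (S ∩ T) := by
  classical
  have hpos : ∀ U : Finset ι, (U : Set ι) ⊆ Mset xb r C D → ∀ j ∈ Dᶜ,
      0 < eps xb r C D U j := by
    intro U hU j hj
    have hjD : j ∉ D := Finset.mem_compl.mp hj
    rcases U.eq_empty_or_nonempty with h | h
    · subst h; simp [eps]
    · have hfin : ((fun i => gam xb r C D i j) '' (U : Set ι)).Finite :=
        U.finite_toSet.image _
      have hne : ((fun i => gam xb r C D i j) '' (U : Set ι)).Nonempty :=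
        (Finset.coe_nonempty.mpr h).image _
      obtain ⟨i, hiU, hEq⟩ := hne.csInf_mem hfin
      rw [eps, ← hEq]
      exact (hU hiU).2 j hjD
  have hdiv : ∀ j, ∀ e1 e2 : EReal, 0 < e1 → e1 ≤ e2 →
      xhat j / e2.toReal ≤ xhat j / e1.toReal := by
    intro j e1 e2 h1 h12
    have h1b : e1 ≠ ⊥ := ne_bot_of_gt h1
    have h1rn : 0 ≤ e1.toReal := by
      by_cases h1t : e1 = ⊤
      · simp [h1t]
      · have := EReal.toReal_le_toReal h1.le (by simp) h1t
        simpa using this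
    by_cases h2t : e2 = ⊤
    · subst h2t
      simp only [EReal.toReal_top, div_zero]
      exact div_nonneg (hxhat j) h1rn
    · have h1t : e1 ≠ ⊤ := fun h => h2t (top_le_iff.mp (h ▸ h12))
      have h1r : 0 < e1.toReal := by
        rw [← EReal.coe_pos, EReal.coe_toReal h1t h1b]; exact h1
      have hle : e1.toReal ≤ e2.toReal := EReal.toReal_le_toReal h12 h1b h2t
      exact div_le_div_of_nonneg_left (hxhat j) h1r hle
  have key : ∀ j ∈ Dᶜ,
      xhat j / (eps xb r C D (S ∪ T) j).toReal
        + xhat j / (eps xb r C D (S ∩ T) j).toReal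
      ≤ xhat j / (eps xb r C D S j).toReal + xhat j / (eps xb r C D T j).toReal := by
    intro j hj
    have hST : (↑(S ∪ T) : Set ι) ⊆ Mset xb r C D := by
      rw [Finset.coe_union]; exact Set.union_subset hS hT
    have hunion : eps xb r C D (S ∪ T) j = min (eps xb r C D S j) (eps xb r C D T j) := by
      rw [eps, Finset.coe_union, Set.image_union, sInf_union]; rfl
    have hIS : eps xb r C D S j ≤ eps xb r C D (S ∩ T) j := by
      apply sInf_le_sInf
      exact Set.image_mono (by exact_mod_cast Finset.inter_subset_left)
    have hIT : eps xb r C D T j ≤ eps xb r C D (S ∩ T) j := by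
      apply sInf_le_sInf
      exact Set.image_mono (by exact_mod_cast Finset.inter_subset_right)
    rcases le_total (eps xb r C D S j) (eps xb r C D T j) with h | h
    · have h1 : eps xb r C D (S ∪ T) j = eps xb r C D S j := by
        rw [hunion, min_eq_left h]
      rw [h1]
      have := hdiv j _ _ (hpos T hT j hj) hIT
      linarith
    · have h1 : eps xb r C D (S ∪ T) j = eps xb r C D T j := by
        rw [hunion, min_eq_right h]
      rw [h1]
      have := hdiv j _ _ (hpos S hS j hj) hIS
      linarith
  have hsum : ∑ j ∈ Dᶜ, (xhat j / (eps xb r C D (S ∪ T) j).toReal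
        + xhat j / (eps xb r C D (S ∩ T) j).toReal)
      ≤ ∑ j ∈ Dᶜ, (xhat j / (eps xb r C D S j).toReal
        + xhat j / (eps xb r C D T j).toReal) :=
    Finset.sum_le_sum key
  rw [Finset.sum_add_distrib, Finset.sum_add_distrib] at hsum
  have hmod : ∑ j ∈ S ∪ T, xhat j / (lamM xb (r j) C).toReal
      + ∑ j ∈ S ∩ T, xhat j / (lamM xb (r j) C).toReal
      = ∑ j ∈ S, xhat j / (lamM xb (r j) C).toReal
      + ∑ j ∈ T, xhat j / (lamM xb (r j) C).toReal :=
    Finset.sum_union_inter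
  simp only [Ffun]
  linarith
end
end
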